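/- arXiv:1708.09774 — 6 statements merged into one kernel-verified Lean document; each statement's English description precedes it below -/
import Mathlib

section
/- For any non-trivial weak tree T, DD_m(T) ≤ α(T), the independence number of T. -/
open SimpleGraph

variable {V : Type*}

/-- `D` is a dominating set of `G`. -/
def IsDomSet (G : SimpleGraph V) (D : Set V) : Prop :=
  ∀ v, v ∉ D → ∃ u ∈ D, G.Adj u v

/-- `D, D'` are disjoint dominating sets with a perfect matching between them
(each vertex of `D` matched to a distinct adjacent vertex of `D'`). -/
def IsSwapPair (G : SimpleGraph V) (D D' : Set V) : Prop :=
  IsDomSet G D ∧ IsDomSet G D' ∧ Disjoint D D' ∧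
    ∃ f : D ≃ D', ∀ x : D, G.Adj x (f x)

/-- `DD_m(G)`: minimum cardinality of a swap set (`⊤` if none exists). -/
noncomputable def DDm (G : SimpleGraph V) : ℕ∞ :=
  sInf {n : ℕ∞ | ∃ D D' : Set V, IsSwapPair G D D' ∧ (D.ncard : ℕ∞) = n}

/-- domination number -/
noncomputable def domNum (G : SimpleGraph V) : ℕ :=
  sInf {n : ℕ | ∃ D : Set V, IsDomSet G D ∧ D.ncard = n}

/-- independence number -/
noncomputable def indepNum (G : SimpleGraph V) : ℕ :=
  sSup {n : ℕ | ∃ I : Set V, (∀ a ∈ I, ∀ b ∈ I, ¬ G.Adj a b) ∧ I.ncard = n}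

/-- a leaf: a vertex of degree one -/
def IsLeaf (G : SimpleGraph V) (v : V) : Prop := (G.neighborSet v).ncard = 1

/-- a strong stem: a vertex adjacent to at least two leaves -/
def IsStrongStem (G : SimpleGraph V) (v : V) : Prop :=
  ∃ l₁ l₂, l₁ ≠ l₂ ∧ G.Adj v l₁ ∧ G.Adj v l₂ ∧ IsLeaf G l₁ ∧ IsLeaf G l₂

/-- a weak graph: no strong stems -/
def IsWeakGraph (G : SimpleGraph V) : Prop := ∀ v, ¬ IsStrongStem G v

/-- the set `S` induces a star (with some center `c`). -/
def IsStarSet (G : SimpleGraph V) (S : Set V) : Prop :=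
  ∃ c ∈ S, (∀ x ∈ S, x ≠ c → G.Adj c x) ∧
    ∀ x ∈ S, ∀ y ∈ S, x ≠ c → y ≠ c → ¬ G.Adj x y

/-- two parts are adjacent -/
def PartsAdj (G : SimpleGraph V) (A B : Set V) : Prop :=
  ∃ a ∈ A, ∃ b ∈ B, G.Adj a b

/-- A simple star partitioning of (the vertices of) `G`. -/
structure IsSSP (G : SimpleGraph V) (P : Finset (Set V)) : Prop where
  cover : ∀ v : V, ∃! S, S ∈ P ∧ v ∈ S
  star : ∀ S ∈ P, IsStarSet G S
  weakStem : ∀ v l, G.Adj v l → IsLeaf G l →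
    (∀ l', G.Adj v l' → IsLeaf G l' → l' = l) → ({v, l} : Set V) ∈ P
  k1 : ∀ S ∈ P, S.ncard = 1 → ∃ A ∈ P, ∃ B ∈ P, A ≠ B ∧
    A.ncard ≠ 1 ∧ B.ncard ≠ 1 ∧ PartsAdj G S A ∧ PartsAdj G S B

/-- weight of a star partitioning: a part of order `k` has weight `k-1`. -/
noncomputable def SSPweight (P : Finset (Set V)) : ℕ := ∑ S ∈ P, (S.ncard - 1)

/-- `S(G)`: minimum weight of a simple star partitioning. -/
noncomputable def starS (G : SimpleGraph V) : ℕ :=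
  sInf {w : ℕ | ∃ P : Finset (Set V), IsSSP G P ∧ SSPweight P = w}

/-- `W` is the vertex set of a weak reduction of `G`: all but one leaf
neighbor of each strong stem are removed. -/
def IsWeakReduction (G : SimpleGraph V) (W : Set V) : Prop :=
  (∀ v, v ∉ W → IsLeaf G v ∧ ∃ s, G.Adj s v ∧ IsStrongStem G s) ∧
  (∀ s, IsStrongStem G s → ∃! l, l ∈ W ∧ G.Adj s l ∧ IsLeaf G l)

namespace SwapAux

variable {T : SimpleGraph V}

lemma unique_path_len (hT : T.IsTree) {r v : V} {p q : T.Walk r v}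
    (hp : p.IsPath) (hq : q.IsPath) : p = q :=
  ((hT.existsUnique_path r v).unique hp hq)

/-- In a tree, adjacent vertices have different distances to any root. -/
lemma dist_adj_ne (hT : T.IsTree) {r u v : V} (h : T.Adj u v) :
    T.dist r u ≠ T.dist r v := by
  classical
  intro he
  obtain ⟨p, hp, hpl⟩ := hT.isConnected.exists_path_of_dist r u
  by_cases hv : v ∈ p.support
  · have h1 : (p.takeUntil v hv).IsPath := hp.takeUntil hv
    obtain ⟨q, hq, hql⟩ := hT.isConnected.exists_path_of_dist r v
    have he2 : p.takeUntil v hv = q := unique_path_len hT h1 hq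
    have h3 : (p.takeUntil v hv).length + (p.dropUntil v hv).length = p.length := by
      rw [← Walk.length_append, Walk.take_spec]
    have h4 : (p.dropUntil v hv).length ≠ 0 := by
      intro h0
      exact h.ne' (Walk.eq_of_length_eq_zero h0)
    rw [he2, hql, ← he, hpl] at h3
    omega
  · have h1 : (Walk.cons h.symm p.reverse).IsPath := by
      refine hp.reverse.cons ?_
      simpa using hv
    have h2 := h1.reverse
    obtain ⟨q, hq, hql⟩ := hT.isConnected.exists_path_of_dist r v
    have he2 : (Walk.cons h.symm p.reverse).reverse = q := unique_path_len hT h2 hq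
    have h3 : (Walk.cons h.symm p.reverse).reverse.length = p.length + 1 := by
      simp
    rw [he2, hql, ← he, hpl] at h3
    omega

lemma dist_adj_cases (hT : T.IsTree) {r u v : V} (h : T.Adj u v) :
    T.dist r v = T.dist r u + 1 ∨ T.dist r u = T.dist r v + 1 := by
  have h1 : T.dist u v = 1 := dist_eq_one_iff_adj.2 h
  have h2 : T.dist r v ≤ T.dist r u + 1 := by
    have := hT.isConnected.dist_triangle (u := r) (v := u) (w := v)
    omega
  have h3 : T.dist r u ≤ T.dist r v + 1 := by
    have h1' : T.dist v u = 1 := dist_eq_one_iff_adj.2 h.symm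
    have := hT.isConnected.dist_triangle (u := r) (v := v) (w := u)
    omega
  have h4 := dist_adj_ne hT h (r := r)
  omega

/-- In a tree, each vertex has at most one neighbour closer to the root. -/
lemma closer_nbr_unique (hT : T.IsTree) {r s u₁ u₂ : V} (h₁ : T.Adj u₁ s) (h₂ : T.Adj u₂ s)
    (hd₁ : T.dist r u₁ + 1 = T.dist r s) (hd₂ : T.dist r u₂ + 1 = T.dist r s) :
    u₁ = u₂ := by
  classical
  have key : ∀ u : V, ∀ h : T.Adj u s, T.dist r u + 1 = T.dist r s →
      ∃ p : T.Walk r u, p.IsPath ∧ p.length = T.dist r u ∧ s ∉ p.support := by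
    intro u h hd
    obtain ⟨p, hp, hpl⟩ := hT.isConnected.exists_path_of_dist r u
    refine ⟨p, hp, hpl, fun hs => ?_⟩
    obtain ⟨q, hq, hql⟩ := hT.isConnected.exists_path_of_dist r s
    have he2 : p.takeUntil s hs = q := unique_path_len hT (hp.takeUntil hs) hq
    have h3 := Walk.length_takeUntil_le p hs
    rw [he2, hql, hpl] at h3
    omega
  obtain ⟨p₁, hp₁, hl₁, hs₁⟩ := key u₁ h₁ hd₁
  obtain ⟨p₂, hp₂, hl₂, hs₂⟩ := key u₂ h₂ hd₂
  have q₁ : (Walk.cons h₁.symm p₁.reverse).IsPath := by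
    refine hp₁.reverse.cons ?_
    simpa using hs₁
  have q₂ : (Walk.cons h₂.symm p₂.reverse).IsPath := by
    refine hp₂.reverse.cons ?_
    simpa using hs₂
  have heq : (Walk.cons h₁.symm p₁.reverse).reverse = (Walk.cons h₂.symm p₂.reverse).reverse :=
    unique_path_len hT q₁.reverse q₂.reverse
  have heq2 : (Walk.cons h₁.symm p₁.reverse) = (Walk.cons h₂.symm p₂.reverse) := by
    have := congrArg Walk.reverse heq
    simpa using this
  have g1 : (Walk.cons h₁.symm p₁.reverse).getVert 1 = u₁ := by
    simp [Walk.getVert_cons_succ]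
  have g2 : (Walk.cons h₂.symm p₂.reverse).getVert 1 = u₂ := by
    simp [Walk.getVert_cons_succ]
  rw [← g1, ← g2, heq2]

lemma exists_closer_nbr (hT : T.IsTree) {r v : V} (hne : v ≠ r) :
    ∃ u, T.Adj v u ∧ T.dist r u + 1 = T.dist r v := by
  classical
  obtain ⟨p, hp, hpl⟩ := hT.isConnected.exists_path_of_dist r v
  obtain ⟨w, ha, p', hcons⟩ := Walk.exists_eq_cons_of_ne hne p.reverse
  refine ⟨w, ha.symm.symm, ?_⟩
  · have hlen : p'.length + 1 = p.length := by
      have := congrArg Walk.length hcons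
      simpa [Nat.add_comm] using this.symm
    have hle : T.dist r w ≤ p'.length := by
      have := dist_le p'.reverse
      simpa [SimpleGraph.dist_comm] using this
    have := dist_adj_cases hT (r := r) ha.symm.symm
    omega

/-- A vertex at maximal distance from `r` (other than `r`) is a leaf,
whose unique neighbour is closer to `r`. -/
lemma max_dist_leaf (hT : T.IsTree) {r v : V} (hmax : ∀ y, T.dist r y ≤ T.dist r v)
    (hne : v ≠ r) : ∃ u, T.neighborSet v = {u} ∧ T.dist r u + 1 = T.dist r v := by
  obtain ⟨u, hu, hud⟩ := exists_closer_nbr hT hne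
  refine ⟨u, ?_, hud⟩
  ext z
  simp only [mem_neighborSet, Set.mem_singleton_iff]
  constructor
  · intro hz
    rcases dist_adj_cases hT (r := r) hz with hc | hc
    · have := hmax z; omega
    · exact closer_nbr_unique hT hz.symm hu.symm (by omega) hud
  · intro h; subst h; exact hu

/-- an interior vertex of a path has two distinct neighbours on the path. -/
lemma two_nbrs {v : V} {a b : V} (p : T.Walk a b) : p.IsPath → v ∈ p.support → v ≠ a → v ≠ b →
    ∃ x ∈ p.support, ∃ y ∈ p.support, x ≠ y ∧ T.Adj v x ∧ T.Adj v y := by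
  induction p with
  | nil =>
    intro _ hv ha _
    simp only [Walk.support_nil, List.mem_singleton] at hv
    exact absurd hv ha
  | cons h q ih =>
    rename_i c d e
    intro hp hv ha hb
    rw [Walk.support_cons, List.mem_cons] at hv
    rcases hv with hv | hv
    · exact absurd hv ha
    · by_cases hvd : v = d
      · subst hvd
        cases q with
        | nil => exact absurd rfl hb
        | @cons _ x _ h2 q2 =>
          have hcq : c ∉ (Walk.cons h2 q2).support := ((Walk.cons_isPath_iff _ _).1 hp).2
          refine ⟨c, by simp, x, by simp, ?_, h.symm, h2⟩
          rintro rfl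
          exact hcq (by simp)
      · obtain ⟨x, hx, y, hy, hxy, h1, h2⟩ := ih hp.of_cons hv hvd hb
        exact ⟨x, by simp [hx], y, by simp [hy], hxy, h1, h2⟩

lemma reachable_induce {W : Set V} {a b : V} (p : T.Walk a b)
    (hsub : ∀ x ∈ p.support, x ∈ W) (ha : a ∈ W) (hb : b ∈ W) :
    (T.induce W).Reachable ⟨a, ha⟩ ⟨b, hb⟩ := by
  induction p with
  | nil => exact Reachable.refl _
  | cons h q ih =>
    rename_i c d e
    have hd : d ∈ W := hsub d (by simp)
    have step : (T.induce W).Adj ⟨c, ha⟩ ⟨d, hd⟩ := h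
    exact (step.reachable).trans (ih (fun x hx => hsub x (by simp [hx])) hd hb)

lemma induce_acyclic {W : Set V} (h : T.IsAcyclic) : (T.induce W).IsAcyclic := by
  intro v p hp
  have := hp.map (f := (SimpleGraph.Embedding.induce W).toHom) Subtype.val_injective
  exact h _ this

lemma induce_adj {W : Set V} {a b : ↥W} :
    (T.induce W).Adj a b ↔ T.Adj a b := Iff.rfl

lemma image_neighborSet_induce {W : Set V} (a : ↥W) :
    Subtype.val '' ((T.induce W).neighborSet a) = T.neighborSet ↑a ∩ W := by
  ext z
  simp only [Set.mem_image, mem_neighborSet, Set.mem_inter_iff]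
  constructor
  · rintro ⟨⟨z', hz'⟩, hadj, rfl⟩; exact ⟨hadj, hz'⟩
  · rintro ⟨hadj, hz⟩; exact ⟨⟨z, hz⟩, hadj, rfl⟩

lemma isLeaf_induce_iff {W : Set V} (a : ↥W) :
    IsLeaf (T.induce W) a ↔ (T.neighborSet ↑a ∩ W).ncard = 1 := by
  unfold IsLeaf
  rw [← image_neighborSet_induce, Set.ncard_image_of_injective _ Subtype.val_injective]

lemma isLeaf_iff {v : V} : IsLeaf T v ↔ ∃ u, T.neighborSet v = {u} := by
  unfold IsLeaf
  rw [Set.ncard_eq_one]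

lemma walk_closed {C : Set V} (hcl : ∀ a ∈ C, ∀ b, T.Adj a b → b ∈ C) :
    ∀ {a b : V}, T.Walk a b → a ∈ C → b ∈ C := by
  intro a b p
  induction p with
  | nil => exact id
  | cons h q ih => exact fun ha => ih (hcl _ ha _ h)

def Good (T : SimpleGraph V) (P : Set (V × V)) : Prop :=
  (∀ p ∈ P, T.Adj p.1 p.2) ∧
  (∀ p ∈ P, ∀ q ∈ P, p ≠ q → p.1 ≠ q.1 ∧ p.1 ≠ q.2 ∧ p.2 ≠ q.1 ∧ p.2 ≠ q.2) ∧
  IsDomSet T (Prod.fst '' P) ∧ IsDomSet T (Prod.snd '' P)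

variable {P : Set (V × V)}

lemma Good.fst_ne_snd (hG : Good T P) {p q : V × V} (hp : p ∈ P) (hq : q ∈ P) :
    p.1 ≠ q.2 := by
  by_cases hpq : p = q
  · subst hpq; exact (hG.1 p hp).ne
  · exact (hG.2.1 p hp q hq hpq).2.1

lemma Good.injOn_fst (hG : Good T P) : Set.InjOn Prod.fst P := by
  intro p hp q hq he
  by_contra hne
  exact (hG.2.1 p hp q hq hne).1 he

lemma Good.injOn_snd (hG : Good T P) : Set.InjOn Prod.snd P := by
  intro p hp q hq he
  by_contra hne
  exact (hG.2.1 p hp q hq hne).2.2.2 he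

lemma Good.disjoint (hG : Good T P) : Disjoint (Prod.fst '' P) (Prod.snd '' P) := by
  rw [Set.disjoint_left]
  rintro x ⟨p, hp, rfl⟩ ⟨q, hq, hx⟩
  exact hG.fst_ne_snd hp hq hx.symm

lemma Good.isSwapPair (hG : Good T P) : IsSwapPair T (Prod.fst '' P) (Prod.snd '' P) := by
  refine ⟨hG.2.2.1, hG.2.2.2, hG.disjoint, ?_⟩
  refine ⟨(Equiv.Set.imageOfInjOn _ P hG.injOn_fst).symm.trans
    (Equiv.Set.imageOfInjOn _ P hG.injOn_snd), ?_⟩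
  intro x
  set y := (Equiv.Set.imageOfInjOn Prod.fst P hG.injOn_fst).symm x with hy
  have h1 : (Equiv.Set.imageOfInjOn Prod.fst P hG.injOn_fst) y = x := by
    rw [hy, Equiv.apply_symm_apply]
  have h2 : (y : V × V).1 = (x : V) := congrArg Subtype.val h1
  have h3 : ((Equiv.Set.imageOfInjOn Prod.snd P hG.injOn_snd) y : V) = (y : V × V).2 := rfl
  have h4 := hG.1 y y.2
  rw [h2] at h4
  simpa [Equiv.trans_apply, ← hy, h3] using h4

lemma Good.ncard_fst (hG : Good T P) : (Prod.fst '' P).ncard = P.ncard :=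
  Set.ncard_image_of_injOn hG.injOn_fst

lemma Good.ncard_snd (hG : Good T P) : (Prod.snd '' P).ncard = P.ncard :=
  Set.ncard_image_of_injOn hG.injOn_snd

lemma Good.stem_mem (hG : Good T P) {x w : V} (hx : T.neighborSet x = {w}) :
    w ∈ Prod.fst '' P ∨ w ∈ Prod.snd '' P := by
  by_cases hxf : x ∈ Prod.fst '' P
  · obtain ⟨p, hp, hpx⟩ := hxf
    have hxs : x ∉ Prod.snd '' P := by
      rintro ⟨q, hq, hqx⟩
      exact hG.fst_ne_snd hp hq (hpx.trans hqx.symm)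
    obtain ⟨u, hu, hadj⟩ := hG.2.2.2 x hxs
    right
    have : u ∈ T.neighborSet x := hadj.symm
    rw [hx] at this
    rwa [← this]
  · obtain ⟨u, hu, hadj⟩ := hG.2.2.1 x hxf
    left
    have : u ∈ T.neighborSet x := hadj.symm
    rw [hx] at this
    rwa [← this]

/-- Extending a good pairing on an induced subgraph by one extra pair `(s, ℓ)` outside. -/
lemma Good.extend {W : Set V} {P' : Set (↥W × ↥W)} (hG : Good (T.induce W) P')
    {s ℓ : V} (hs : s ∉ W) (hl : ℓ ∉ W) (hsl : T.Adj s ℓ)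
    (hdom1 : ∀ v, v ∉ W → v ≠ s →
      ∃ u ∈ (Subtype.val '' (Prod.fst '' P')) ∪ {s}, T.Adj u v)
    (hdom2 : ∀ v, v ∉ W → v ≠ ℓ →
      ∃ u ∈ (Subtype.val '' (Prod.snd '' P')) ∪ {ℓ}, T.Adj u v) :
    ∃ P : Set (V × V), Good T P := by
  classical
  set m : ↥W × ↥W → V × V := fun q => ((q.1 : V), (q.2 : V)) with hm
  refine ⟨m '' P' ∪ {(s, ℓ)}, ?_, ?_, ?_, ?_⟩
  · rintro p (⟨q, hq, rfl⟩ | rfl)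
    · exact hG.1 q hq
    · exact hsl
  · have hne1 : ∀ (a : ↥W) {z : V}, z ∉ W → (a : V) ≠ z := fun a z hz h => hz (h ▸ a.2)
    rintro p (⟨q, hq, rfl⟩ | rfl) p' (⟨q', hq', rfl⟩ | rfl) hne
    · have hqq : q ≠ q' := by rintro rfl; exact hne rfl
      obtain ⟨h1, h2, h3, h4⟩ := hG.2.1 q hq q' hq' hqq
      exact ⟨Subtype.coe_injective.ne h1, Subtype.coe_injective.ne h2,
        Subtype.coe_injective.ne h3, Subtype.coe_injective.ne h4⟩
    · exact ⟨hne1 q.1 hs, hne1 q.1 hl, hne1 q.2 hs, hne1 q.2 hl⟩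
    · exact ⟨(hne1 q'.1 hs).symm, (hne1 q'.2 hs).symm,
        (hne1 q'.1 hl).symm, (hne1 q'.2 hl).symm⟩
    · exact absurd rfl hne
  · have hfst : Prod.fst '' (m '' P' ∪ {(s, ℓ)}) =
        (Subtype.val '' (Prod.fst '' P')) ∪ {s} := by
      rw [Set.image_union, Set.image_image, Set.image_image]
      simp [hm]
    rw [hfst]
    intro v hv
    by_cases hvW : v ∈ W
    · have hnot : (⟨v, hvW⟩ : ↥W) ∉ Prod.fst '' P' := by
        intro hmem
        exact hv (Set.mem_union_left _ ⟨⟨v, hvW⟩, hmem, rfl⟩)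
      obtain ⟨u, hu, hadj⟩ := hG.2.2.1 ⟨v, hvW⟩ hnot
      exact ⟨↑u, Set.mem_union_left _ ⟨u, hu, rfl⟩, hadj⟩
    · have hvs : v ≠ s := fun h => hv (h ▸ Set.mem_union_right _ rfl)
      exact hdom1 v hvW hvs
  · have hsnd : Prod.snd '' (m '' P' ∪ {(s, ℓ)}) =
        (Subtype.val '' (Prod.snd '' P')) ∪ {ℓ} := by
      rw [Set.image_union, Set.image_image, Set.image_image]
      simp [hm]
    rw [hsnd]
    intro v hv
    by_cases hvW : v ∈ W
    · have hnot : (⟨v, hvW⟩ : ↥W) ∉ Prod.snd '' P' := by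
        intro hmem
        exact hv (Set.mem_union_left _ ⟨⟨v, hvW⟩, hmem, rfl⟩)
      obtain ⟨u, hu, hadj⟩ := hG.2.2.2 ⟨v, hvW⟩ hnot
      exact ⟨↑u, Set.mem_union_left _ ⟨u, hu, rfl⟩, hadj⟩
    · have hvl : v ≠ ℓ := fun h => hv (h ▸ Set.mem_union_right _ rfl)
      exact hdom2 v hvW hvl


universe u

lemma main : ∀ (n : ℕ) {V : Type u} [Fintype V] (T : SimpleGraph V),
    Fintype.card V = n → T.IsTree → IsWeakGraph T → 2 ≤ Fintype.card V →
    ∃ P : Set (V × V), Good T P := by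
  intro n
  induction n using Nat.strong_induction_on with
  | _ n IH =>
  intro V _ T hcard hT hweak h2
  classical
  have hconn := hT.isConnected
  have hnV : Nonempty V := Fintype.card_pos_iff.mp (by omega)
  obtain ⟨r⟩ := hnV
  obtain ⟨ℓ, -, hmax'⟩ := Finset.exists_max_image Finset.univ (fun y => T.dist r y)
    ⟨r, Finset.mem_univ r⟩
  have hmax : ∀ y, T.dist r y ≤ T.dist r ℓ := fun y => hmax' y (Finset.mem_univ y)
  obtain ⟨y₀, hy₀⟩ := Fintype.exists_ne_of_one_lt_card (by omega) r
  have hd1 : 1 ≤ T.dist r ℓ := by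
    have h1 := hconn.pos_dist_of_ne (Ne.symm hy₀)
    have h2 := hmax y₀
    omega
  have hlr : ℓ ≠ r := by
    rintro rfl
    rw [SimpleGraph.dist_self] at hd1
    omega
  obtain ⟨s, hnbrℓ, hds⟩ := max_dist_leaf hT hmax hlr
  have hadjℓs : T.Adj ℓ s := by
    have : s ∈ T.neighborSet ℓ := by rw [hnbrℓ]; rfl
    exact this
  have hadjsℓ : T.Adj s ℓ := hadjℓs.symm
  have hleafℓ : IsLeaf T ℓ := isLeaf_iff.2 ⟨s, hnbrℓ⟩
  have hℓs : ℓ ≠ s := hadjℓs.ne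
  by_cases hsr : s = r
  · -- base case: the graph is a single edge
    rw [← hsr] at hmax hd1 hds
    have hs0 : T.dist s s = 0 := SimpleGraph.dist_self
    have hdl : T.dist s ℓ = 1 := by omega
    have hall : ∀ y : V, y = s ∨ y = ℓ := by
      intro y
      by_cases hyr : y = s
      · exact Or.inl hyr
      right
      have hy1 : T.dist s y = 1 := by
        have hp := hconn.pos_dist_of_ne (Ne.symm hyr)
        have := hmax y
        omega
      have hymax : ∀ w, T.dist s w ≤ T.dist s y := by
        intro w; rw [hy1]; have := hmax w; omega
      obtain ⟨z, hz, -⟩ := max_dist_leaf hT hymax hyr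
      by_contra hyl
      exact hweak s ⟨y, ℓ, hyl, dist_eq_one_iff_adj.1 hy1, hadjsℓ, isLeaf_iff.2 ⟨z, hz⟩, hleafℓ⟩
    refine ⟨{(s, ℓ)}, ?_, ?_, ?_, ?_⟩
    · rintro p rfl; exact hadjsℓ
    · rintro p rfl q rfl hne; exact absurd rfl hne
    · intro v hv
      rcases hall v with h | h
      · exact absurd ⟨(s, ℓ), rfl, h.symm⟩ hv
      · exact ⟨s, ⟨(s, ℓ), rfl, rfl⟩, by rw [h]; exact hadjsℓ⟩
    · intro v hv
      rcases hall v with h | h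
      · exact ⟨ℓ, ⟨(s, ℓ), rfl, rfl⟩, by rw [h]; exact hadjℓs⟩
      · exact absurd ⟨(s, ℓ), rfl, h.symm⟩ hv
  · -- main case
    obtain ⟨u, hadjsu, hdu⟩ := exists_closer_nbr hT hsr
    have huℓ : u ≠ ℓ := by intro h; rw [h] at hdu; omega
    have hus : u ≠ s := hadjsu.ne'
    have hnbrs : T.neighborSet s = {ℓ, u} := by
      ext z
      simp only [mem_neighborSet, Set.mem_insert_iff, Set.mem_singleton_iff]
      constructor
      · intro hz
        rcases dist_adj_cases hT (r := r) hz with hc | hc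
        · left
          have hzmax : ∀ w, T.dist r w ≤ T.dist r z := by
            intro w; have := hmax w; omega
          have hzr : z ≠ r := by
            rintro rfl
            rw [SimpleGraph.dist_self] at hc
            omega
          obtain ⟨t, ht, -⟩ := max_dist_leaf hT hzmax hzr
          by_contra hzℓ
          exact hweak s ⟨z, ℓ, hzℓ, hz, hadjsℓ, isLeaf_iff.2 ⟨t, ht⟩, hleafℓ⟩
        · exact Or.inr (closer_nbr_unique hT (r := r) hz.symm hadjsu.symm (by omega) (by omega))
      · rintro (rfl | rfl)
        exacts [hadjsℓ, hadjsu]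
    have hunotleaf : ¬ IsLeaf T u := fun hul =>
      hweak s ⟨ℓ, u, Ne.symm huℓ, hadjsℓ, hadjsu, hleafℓ, hul⟩
    obtain ⟨w₀, hadjuw₀, hw₀s⟩ : ∃ w, T.Adj u w ∧ w ≠ s := by
      by_contra hcon
      push_neg at hcon
      refine hunotleaf (isLeaf_iff.2 ⟨s, ?_⟩)
      ext z
      simp only [mem_neighborSet, Set.mem_singleton_iff]
      exact ⟨fun h => hcon z h, fun h => h ▸ hadjsu.symm⟩
    have hw₀ℓ : w₀ ≠ ℓ := by
      intro h
      have hu : u ∈ T.neighborSet ℓ := by rw [← h]; exact hadjuw₀.symm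
      rw [hnbrℓ] at hu
      exact hus hu
    set W : Set V := {x | x ≠ ℓ ∧ x ≠ s} with hWdef
    have hℓW : ℓ ∉ W := fun h => h.1 rfl
    have hsW : s ∉ W := fun h => h.2 rfl
    have huW : u ∈ W := ⟨huℓ, hus⟩
    have hw₀W : w₀ ∈ W := ⟨hw₀ℓ, hw₀s⟩
    have hpath : ∀ (a b : V), a ∈ W → b ∈ W →
        ∀ p : T.Walk a b, p.IsPath → ∀ x ∈ p.support, x ∈ W := by
      intro a b ha hb p hp x hx
      have hℓp : ℓ ∉ p.support := by
        intro hmem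
        obtain ⟨x₁, hx₁, x₂, hx₂, hne, ha₁, ha₂⟩ :=
          two_nbrs p hp hmem (fun h => ha.1 h.symm) (fun h => hb.1 h.symm)
        have e1 : x₁ = s := by
          have : x₁ ∈ T.neighborSet ℓ := ha₁
          rwa [hnbrℓ] at this
        have e2 : x₂ = s := by
          have : x₂ ∈ T.neighborSet ℓ := ha₂
          rwa [hnbrℓ] at this
        exact hne (e1.trans e2.symm)
      have hsp : s ∉ p.support := by
        intro hmem
        obtain ⟨x₁, hx₁, x₂, hx₂, hne, ha₁, ha₂⟩ :=
          two_nbrs p hp hmem (fun h => ha.2 h.symm) (fun h => hb.2 h.symm)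
        have e1 : x₁ = ℓ ∨ x₁ = u := by
          have : x₁ ∈ T.neighborSet s := ha₁
          rwa [hnbrs] at this
        have e2 : x₂ = ℓ ∨ x₂ = u := by
          have : x₂ ∈ T.neighborSet s := ha₂
          rwa [hnbrs] at this
        rcases e1 with rfl | rfl
        · exact hℓp hx₁
        rcases e2 with rfl | rfl
        · exact hℓp hx₂
        · exact hne rfl
      exact ⟨fun h => hℓp (h ▸ hx), fun h => hsp (h ▸ hx)⟩
    have hT' : (T.induce W).IsTree := by
      constructor
      · haveI : Nonempty ↥W := ⟨⟨u, huW⟩⟩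
        refine SimpleGraph.Connected.mk ?_
        rintro ⟨a, ha⟩ ⟨b, hb⟩
        obtain ⟨p, hp, -⟩ := hconn.exists_path_of_dist a b
        exact reachable_induce p (hpath a b ha hb p hp) ha hb
      · exact induce_acyclic hT.IsAcyclic
    have hlt : Fintype.card ↥W < n := by
      rw [← hcard]
      exact Fintype.card_subtype_lt (x := ℓ) (by simp [hWdef])
    have hge2 : 2 ≤ Fintype.card ↥W := by
      exact Fintype.one_lt_card_iff_nontrivial.2 ⟨⟨u, huW⟩, ⟨w₀, hw₀W⟩, by simp [Subtype.ext_iff, hadjuw₀.ne]⟩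
    by_cases hWweak : IsWeakGraph (T.induce W)
    · -- T - {ℓ, s} is weak: recurse and add the pair (s, ℓ)
      obtain ⟨P', hP'⟩ := IH _ hlt (T.induce W) rfl hT' hWweak hge2
      refine hP'.extend hsW hℓW hadjsℓ ?_ ?_
      · intro v hv hvs
        have hvℓ : v = ℓ := by
          by_contra hvl
          exact hv ⟨hvl, hvs⟩
        subst hvℓ
        exact ⟨s, Set.mem_union_right _ rfl, hadjsℓ⟩
      · intro v hv hvℓ
        have hvs : v = s := by
          by_contra hvs
          exact hv ⟨hvℓ, hvs⟩
        subst hvs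
        exact ⟨ℓ, Set.mem_union_right _ rfl, hadjℓs⟩
    · -- T - {ℓ, s} has a strong stem
      simp only [IsWeakGraph, not_forall, not_not] at hWweak
      obtain ⟨z, l₁, l₂, hl12, hzl₁, hzl₂, hleaf₁, hleaf₂⟩ := hWweak
      have hnbrW : ∀ y : ↥W, (y : V) ≠ u → T.neighborSet ↑y ∩ W = T.neighborSet ↑y := by
        intro y hyu
        refine Set.inter_eq_left.2 fun c hc => ?_
        refine ⟨fun h => ?_, fun h => ?_⟩
        · have h1 : (y : V) ∈ T.neighborSet ℓ := by rw [← h]; exact hc.symm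
          rw [hnbrℓ, Set.mem_singleton_iff] at h1
          exact y.2.2 h1
        · have h1 : (y : V) ∈ T.neighborSet s := by rw [← h]; exact hc.symm
          rw [hnbrs] at h1
          rcases h1 with h1 | h1
          · exact y.2.1 h1
          · exact hyu h1
      have hleafT : ∀ y : ↥W, (y : V) ≠ u → IsLeaf (T.induce W) y → IsLeaf T ↑y := by
        intro y hyu hy
        have h1 := (isLeaf_induce_iff y).1 hy
        rwa [hnbrW y hyu] at h1
      have hkey : ∀ (la lb : ↥W), la ≠ lb → (T.induce W).Adj z la → (T.induce W).Adj z lb →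
          IsLeaf (T.induce W) la → IsLeaf (T.induce W) lb → (la : V) = u →
          ∃ P : Set (V × V), Good T P := by
        intro la lb hab hza hzb hla hlb hua
        set w : V := ↑z with hwdef
        have hwW : w ∈ W := z.2
        have hwℓ : w ≠ ℓ := hwW.1
        have hws : w ≠ s := hwW.2
        have hzu : T.Adj w u := by
          have h1 := induce_adj.1 hza
          rwa [hua] at h1
        have hwu : w ≠ u := hzu.ne
        set x : V := ↑lb with hxdef
        have hxW : x ∈ W := lb.2
        have hxℓ : x ≠ ℓ := hxW.1
        have hxs : x ≠ s := hxW.2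
        have hxu : x ≠ u := by
          intro h
          exact hab (Subtype.coe_injective (hua.trans h.symm))
        have hadjwx : T.Adj w x := induce_adj.1 hzb
        have hwx : w ≠ x := hadjwx.ne
        have hxleafT : IsLeaf T x := hleafT lb hxu hlb
        have hnbrx : T.neighborSet x = {w} := by
          obtain ⟨w', hw'⟩ := isLeaf_iff.1 hxleafT
          have h1 : w ∈ T.neighborSet x := hadjwx.symm
          rw [hw', Set.mem_singleton_iff] at h1
          rw [hw', ← h1]
        have hnbru : T.neighborSet u = {s, w} := by
          have h1 : (T.neighborSet u ∩ W).ncard = 1 := by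
            have h2 := (isLeaf_induce_iff la).1 hla
            rwa [hua] at h2
          obtain ⟨w', hw'⟩ := Set.ncard_eq_one.1 h1
          have hwmem : w ∈ T.neighborSet u ∩ W := ⟨hzu.symm, hwW⟩
          rw [hw', Set.mem_singleton_iff] at hwmem
          ext c
          simp only [mem_neighborSet, Set.mem_insert_iff, Set.mem_singleton_iff]
          constructor
          · intro hc
            by_cases hcW : c ∈ W
            · right
              have h3 : c ∈ T.neighborSet u ∩ W := ⟨hc, hcW⟩
              rw [hw', Set.mem_singleton_iff] at h3
              rw [h3, ← hwmem]
            · have h4 : c = ℓ ∨ c = s := by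
                by_contra hcon
                push_neg at hcon
                exact hcW ⟨hcon.1, hcon.2⟩
              rcases h4 with rfl | rfl
              · exfalso
                have h5 : u ∈ T.neighborSet c := hc.symm
                rw [hnbrℓ, Set.mem_singleton_iff] at h5
                exact hus h5
              · exact Or.inl rfl
          · rintro (rfl | rfl)
            · exact hadjsu.symm
            · exact hzu.symm
        by_cases hsub : T.neighborSet w ⊆ {u, x}
        · -- the tree is a path on the five vertices ℓ, s, u, w, x
          have hC : ∀ y : V, y ∈ ({ℓ, s, u, w, x} : Set V) := by
            intro y
            have hcl : ∀ a ∈ ({ℓ, s, u, w, x} : Set V), ∀ b, T.Adj a b →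
                b ∈ ({ℓ, s, u, w, x} : Set V) := by
              intro a ha b hab
              simp only [Set.mem_insert_iff, Set.mem_singleton_iff] at ha ⊢
              rcases ha with h | h | h | h | h
              · have h1 : b ∈ T.neighborSet ℓ := by rw [← h]; exact hab
                rw [hnbrℓ, Set.mem_singleton_iff] at h1
                exact Or.inr (Or.inl h1)
              · have h1 : b ∈ T.neighborSet s := by rw [← h]; exact hab
                rw [hnbrs] at h1
                rcases h1 with h1 | h1
                · exact Or.inl h1
                · exact Or.inr (Or.inr (Or.inl h1))
              · have h1 : b ∈ T.neighborSet u := by rw [← h]; exact hab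
                rw [hnbru] at h1
                rcases h1 with h1 | h1
                · exact Or.inr (Or.inl h1)
                · exact Or.inr (Or.inr (Or.inr (Or.inl h1)))
              · have h1 : b ∈ T.neighborSet w := by rw [← h]; exact hab
                have h2 := hsub h1
                rcases h2 with h2 | h2
                · exact Or.inr (Or.inr (Or.inl h2))
                · exact Or.inr (Or.inr (Or.inr (Or.inr h2)))
              · have h1 : b ∈ T.neighborSet x := by rw [← h]; exact hab
                rw [hnbrx, Set.mem_singleton_iff] at h1
                exact Or.inr (Or.inr (Or.inr (Or.inl h1)))
            obtain ⟨p⟩ := hconn.preconnected ℓ y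
            exact walk_closed hcl p (by left; rfl)
          refine ⟨{(x, w), (s, ℓ)}, ?_, ?_, ?_, ?_⟩
          · rintro p (rfl | rfl)
            · exact hadjwx.symm
            · exact hadjsℓ
          · rintro p (rfl | rfl) q (rfl | rfl) hne
            · exact absurd rfl hne
            · exact ⟨hxs, hxℓ, hws, hwℓ⟩
            · exact ⟨hxs.symm, hws.symm, hxℓ.symm, hwℓ.symm⟩
            · exact absurd rfl hne
          · intro v hv
            rcases hC v with h | h | h | h | h
            · exact ⟨s, ⟨(s, ℓ), Or.inr rfl, rfl⟩, by rw [h]; exact hadjsℓ⟩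
            · exact absurd ⟨(s, ℓ), Or.inr rfl, h.symm⟩ hv
            · exact ⟨s, ⟨(s, ℓ), Or.inr rfl, rfl⟩, by rw [h]; exact hadjsu⟩
            · exact ⟨x, ⟨(x, w), Or.inl rfl, rfl⟩, by rw [h]; exact hadjwx.symm⟩
            · exact absurd ⟨(x, w), Or.inl rfl, h.symm⟩ hv
          · intro v hv
            rcases hC v with h | h | h | h | h
            · exact absurd ⟨(s, ℓ), Or.inr rfl, h.symm⟩ hv
            · exact ⟨ℓ, ⟨(s, ℓ), Or.inr rfl, rfl⟩, by rw [h]; exact hadjℓs⟩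
            · exact ⟨w, ⟨(x, w), Or.inl rfl, rfl⟩, by rw [h]; exact hzu⟩
            · exact absurd ⟨(x, w), Or.inl rfl, h.symm⟩ hv
            · exact ⟨w, ⟨(x, w), Or.inl rfl, rfl⟩, by rw [h]; exact hadjwx⟩
        · -- general case: recurse on T - {ℓ, s, u}
          obtain ⟨t, htw, htux⟩ := Set.not_subset.1 hsub
          have hadjwt : T.Adj w t := htw
          have htu : t ≠ u := fun h => htux (by rw [h]; exact Or.inl rfl)
          have htx : t ≠ x := fun h => htux (by rw [h]; exact Or.inr rfl)
          have htℓ : t ≠ ℓ := by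
            intro h
            have h1 : w ∈ T.neighborSet ℓ := by rw [← h]; exact hadjwt.symm
            rw [hnbrℓ, Set.mem_singleton_iff] at h1
            exact hws h1
          have hts : t ≠ s := by
            intro h
            have h1 : w ∈ T.neighborSet s := by rw [← h]; exact hadjwt.symm
            rw [hnbrs] at h1
            rcases h1 with h1 | h1
            · exact hwℓ h1
            · exact hwu h1
          set W₂ : Set V := {y | y ≠ ℓ ∧ y ≠ s ∧ y ≠ u} with hW₂def
          have hℓW₂ : ℓ ∉ W₂ := fun h => h.1 rfl
          have hsW₂ : s ∉ W₂ := fun h => h.2.1 rfl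
          have huW₂ : u ∉ W₂ := fun h => h.2.2 rfl
          have hwW₂ : w ∈ W₂ := ⟨hwℓ, hws, hwu⟩
          have hxW₂ : x ∈ W₂ := ⟨hxℓ, hxs, hxu⟩
          have htW₂ : t ∈ W₂ := ⟨htℓ, hts, htu⟩
          have hpath₂ : ∀ (a b : V), a ∈ W₂ → b ∈ W₂ →
              ∀ p : T.Walk a b, p.IsPath → ∀ y ∈ p.support, y ∈ W₂ := by
            intro a b ha hb p hp y hy
            have hℓp : ℓ ∉ p.support := by
              intro hmem
              obtain ⟨x₁, hx₁, x₂, hx₂, hne, ha₁, ha₂⟩ :=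
                two_nbrs p hp hmem (fun h => ha.1 h.symm) (fun h => hb.1 h.symm)
              have e1 : x₁ ∈ T.neighborSet ℓ := ha₁
              have e2 : x₂ ∈ T.neighborSet ℓ := ha₂
              rw [hnbrℓ, Set.mem_singleton_iff] at e1 e2
              exact hne (e1.trans e2.symm)
            have hsp : s ∉ p.support := by
              intro hmem
              obtain ⟨x₁, hx₁, x₂, hx₂, hne, ha₁, ha₂⟩ :=
                two_nbrs p hp hmem (fun h => ha.2.1 h.symm) (fun h => hb.2.1 h.symm)
              have e1 : x₁ ∈ T.neighborSet s := ha₁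
              have e2 : x₂ ∈ T.neighborSet s := ha₂
              rw [hnbrs] at e1 e2
              rcases e1 with rfl | rfl
              · exact hℓp hx₁
              rcases e2 with rfl | rfl
              · exact hℓp hx₂
              · exact hne rfl
            have hup : u ∉ p.support := by
              intro hmem
              obtain ⟨x₁, hx₁, x₂, hx₂, hne, ha₁, ha₂⟩ :=
                two_nbrs p hp hmem (fun h => ha.2.2 h.symm) (fun h => hb.2.2 h.symm)
              have e1 : x₁ ∈ T.neighborSet u := ha₁
              have e2 : x₂ ∈ T.neighborSet u := ha₂
              rw [hnbru] at e1 e2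
              rcases e1 with rfl | rfl
              · exact hsp hx₁
              rcases e2 with rfl | rfl
              · exact hsp hx₂
              · exact hne rfl
            exact ⟨fun h => hℓp (h ▸ hy), fun h => hsp (h ▸ hy), fun h => hup (h ▸ hy)⟩
          have hT₂ : (T.induce W₂).IsTree := by
            constructor
            · haveI : Nonempty ↥W₂ := ⟨⟨w, hwW₂⟩⟩
              refine SimpleGraph.Connected.mk ?_
              rintro ⟨a, ha⟩ ⟨b, hb⟩
              obtain ⟨p, hp, -⟩ := hconn.exists_path_of_dist a b
              exact reachable_induce p (hpath₂ a b ha hb p hp) ha hb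
            · exact induce_acyclic hT.IsAcyclic
          have hlt₂ : Fintype.card ↥W₂ < n := by
            rw [← hcard]
            exact Fintype.card_subtype_lt (x := ℓ) (by simp [hW₂def])
          have hge2₂ : 2 ≤ Fintype.card ↥W₂ :=
            Fintype.one_lt_card_iff_nontrivial.2
              ⟨⟨w, hwW₂⟩, ⟨x, hxW₂⟩, by simp [Subtype.ext_iff, hwx]⟩
          have hweak₂ : IsWeakGraph (T.induce W₂) := by
            intro y hy
            obtain ⟨m₁, m₂, hm12, hym₁, hym₂, hmleaf₁, hmleaf₂⟩ := hy
            have htrans : ∀ m : ↥W₂, IsLeaf (T.induce W₂) m → IsLeaf T ↑m := by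
              intro m hm
              by_cases hmw' : (m : V) = w
              · exfalso
                have h1 := (isLeaf_induce_iff m).1 hm
                rw [hmw'] at h1
                have hx' : x ∈ T.neighborSet w ∩ W₂ := ⟨hadjwx, hxW₂⟩
                have ht' : t ∈ T.neighborSet w ∩ W₂ := ⟨hadjwt, htW₂⟩
                have h2 : 1 < (T.neighborSet w ∩ W₂).ncard :=
                  (Set.one_lt_ncard_iff (Set.toFinite _)).2 ⟨x, t, hx', ht', htx.symm⟩
                omega
              · have h1 := (isLeaf_induce_iff m).1 hm
                have h2 : T.neighborSet ↑m ∩ W₂ = T.neighborSet ↑m := by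
                  refine Set.inter_eq_left.2 fun c hc => ?_
                  refine ⟨fun h => ?_, fun h => ?_, fun h => ?_⟩
                  · have h3 : (m : V) ∈ T.neighborSet ℓ := by rw [← h]; exact hc.symm
                    rw [hnbrℓ, Set.mem_singleton_iff] at h3
                    exact m.2.2.1 h3
                  · have h3 : (m : V) ∈ T.neighborSet s := by rw [← h]; exact hc.symm
                    rw [hnbrs] at h3
                    rcases h3 with h3 | h3
                    · exact m.2.1 h3
                    · exact m.2.2.2 h3
                  · have h3 : (m : V) ∈ T.neighborSet u := by rw [← h]; exact hc.symm
                    rw [hnbru] at h3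
                    rcases h3 with h3 | h3
                    · exact m.2.2.1 h3
                    · exact hmw' h3
                rwa [h2] at h1
            exact hweak ↑y ⟨↑m₁, ↑m₂, Subtype.coe_injective.ne hm12, hym₁, hym₂,
              htrans m₁ hmleaf₁, htrans m₂ hmleaf₂⟩
          obtain ⟨P'', hP''⟩ := IH _ hlt₂ (T.induce W₂) rfl hT₂ hweak₂ hge2₂
          have hnbrx₂ : (T.induce W₂).neighborSet ⟨x, hxW₂⟩ = {⟨w, hwW₂⟩} := by
            ext q
            simp only [mem_neighborSet, Set.mem_singleton_iff]
            constructor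
            · intro hq
              have h1 : (q : V) ∈ T.neighborSet x := induce_adj.1 hq
              rw [hnbrx, Set.mem_singleton_iff] at h1
              exact Subtype.coe_injective h1
            · rintro rfl
              exact hadjwx.symm
          rcases hP''.stem_mem hnbrx₂ with hwfst | hwsnd
          · refine hP''.extend (s := ℓ) (ℓ := s) hℓW₂ hsW₂ hadjℓs ?_ ?_
            · intro v hv hvℓ
              have h1 : v = s ∨ v = u := by
                by_contra hc
                push_neg at hc
                exact hv ⟨hvℓ, hc.1, hc.2⟩
              rcases h1 with rfl | rfl
              · exact ⟨ℓ, Set.mem_union_right _ rfl, hadjℓs⟩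
              · exact ⟨w, Set.mem_union_left _ ⟨⟨w, hwW₂⟩, hwfst, rfl⟩, hzu⟩
            · intro v hv hvs
              have h1 : v = ℓ ∨ v = u := by
                by_contra hc
                push_neg at hc
                exact hv ⟨hc.1, hvs, hc.2⟩
              rcases h1 with rfl | rfl
              · exact ⟨s, Set.mem_union_right _ rfl, hadjsℓ⟩
              · exact ⟨s, Set.mem_union_right _ rfl, hadjsu⟩
          · refine hP''.extend (s := s) (ℓ := ℓ) hsW₂ hℓW₂ hadjsℓ ?_ ?_
            · intro v hv hvs
              have h1 : v = ℓ ∨ v = u := by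
                by_contra hc
                push_neg at hc
                exact hv ⟨hc.1, hvs, hc.2⟩
              rcases h1 with rfl | rfl
              · exact ⟨s, Set.mem_union_right _ rfl, hadjsℓ⟩
              · exact ⟨s, Set.mem_union_right _ rfl, hadjsu⟩
            · intro v hv hvℓ
              have h1 : v = s ∨ v = u := by
                by_contra hc
                push_neg at hc
                exact hv ⟨hvℓ, hc.1, hc.2⟩
              rcases h1 with rfl | rfl
              · exact ⟨ℓ, Set.mem_union_right _ rfl, hadjℓs⟩
              · exact ⟨w, Set.mem_union_left _ ⟨⟨w, hwW₂⟩, hwsnd, rfl⟩, hzu⟩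
      by_cases h1u : (l₁ : V) = u
      · exact hkey l₁ l₂ hl12 hzl₁ hzl₂ hleaf₁ hleaf₂ h1u
      by_cases h2u : (l₂ : V) = u
      · exact hkey l₂ l₁ hl12.symm hzl₂ hzl₁ hleaf₂ hleaf₁ h2u
      · exact absurd ⟨↑l₁, ↑l₂, Subtype.coe_injective.ne hl12, hzl₁, hzl₂,
          hleafT l₁ h1u hleaf₁, hleafT l₂ h2u hleaf₂⟩ (hweak ↑z)


lemma exists_big_indep [Fintype V] {T : SimpleGraph V} (hT : T.IsTree) (hne : Nonempty V) :
    ∃ I : Set V, (∀ a ∈ I, ∀ b ∈ I, ¬ T.Adj a b) ∧ Fintype.card V ≤ 2 * I.ncard := by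
  classical
  obtain ⟨r⟩ := hne
  set E : Set V := {v | Even (T.dist r v)} with hE
  have hcompl : Eᶜ = {v | ¬ Even (T.dist r v)} := rfl
  have hsum : E.ncard + Eᶜ.ncard = Fintype.card V := by
    rw [Set.ncard_add_ncard_compl, Nat.card_eq_fintype_card]
  have hindepE : ∀ a ∈ E, ∀ b ∈ E, ¬ T.Adj a b := by
    intro a ha b hb hab
    have ha' : Even (T.dist r a) := ha
    have hb' : Even (T.dist r b) := hb
    rcases dist_adj_cases hT (r := r) hab with hc | hc
    · rw [hc] at hb'
      exact (Nat.even_add_one.1 hb') ha'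
    · rw [hc] at ha'
      exact (Nat.even_add_one.1 ha') hb'
  have hindepO : ∀ a ∈ Eᶜ, ∀ b ∈ Eᶜ, ¬ T.Adj a b := by
    intro a ha b hb hab
    have ha' : ¬ Even (T.dist r a) := ha
    have hb' : ¬ Even (T.dist r b) := hb
    rcases dist_adj_cases hT (r := r) hab with hc | hc
    · rw [hc] at hb'
      exact hb' (Nat.even_add_one.2 ha')
    · rw [hc] at ha'
      exact ha' (Nat.even_add_one.2 hb')
  by_cases hcase : Fintype.card V ≤ 2 * E.ncard
  · exact ⟨E, hindepE, hcase⟩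
  · exact ⟨Eᶜ, hindepO, by omega⟩

end SwapAux

theorem stmt_6 {V : Type*} [Fintype V] (T : SimpleGraph V) (hT : T.IsTree)
    (hnt : 2 ≤ Fintype.card V) (hweak : IsWeakGraph T) :
    DDm T ≤ (_root_.indepNum T : ℕ∞) := by
  classical
  have hnV : Nonempty V := Fintype.card_pos_iff.mp (by omega)
  obtain ⟨P, hP⟩ := SwapAux.main (Fintype.card V) T rfl hT hweak hnt
  have hswap := hP.isSwapPair
  have hdisj := hP.disjoint
  have hcard : (Prod.fst '' P).ncard + (Prod.snd '' P).ncard ≤ Fintype.card V := by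
    rw [← Set.ncard_union_eq hdisj (Set.toFinite _) (Set.toFinite _)]
    have h1 := Set.ncard_le_ncard (Set.subset_univ (Prod.fst '' P ∪ Prod.snd '' P))
      Set.finite_univ
    rwa [Set.ncard_univ, Nat.card_eq_fintype_card] at h1
  have hDD' : (Prod.fst '' P).ncard = (Prod.snd '' P).ncard := by
    rw [hP.ncard_fst, hP.ncard_snd]
  obtain ⟨I, hI, hIc⟩ := SwapAux.exists_big_indep hT hnV
  have hIle : I.ncard ≤ _root_.indepNum T := by
    apply le_csSup
    · refine ⟨Fintype.card V, ?_⟩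
      rintro m ⟨J, -, rfl⟩
      have h1 := Set.ncard_le_ncard (Set.subset_univ J) Set.finite_univ
      rwa [Set.ncard_univ, Nat.card_eq_fintype_card] at h1
    · exact ⟨I, hI, rfl⟩
  have hDle : (Prod.fst '' P).ncard ≤ _root_.indepNum T := by omega
  calc DDm T ≤ ((Prod.fst '' P).ncard : ℕ∞) :=
        sInf_le ⟨Prod.fst '' P, Prod.snd '' P, hswap, rfl⟩
    _ ≤ (_root_.indepNum T : ℕ∞) := by exact_mod_cast hDle
end

section
/- If T is a non-trivial tree, then γ(T) = α(T) if and only if T is obtained from some tree H of order |V(T)|/2 by attaching exactly one pendant leaf to each vertex of H (i.e., T is the corona H ∘ K_1). -/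
open SimpleGraph

variable {V : Type*}

/-- `G` is a corona `H ∘ K₁`: obtained from `H = G[W]` by attaching exactly one
pendant leaf to each vertex of `W`. -/
def IsCorona {V : Type*} (G : SimpleGraph V) : Prop :=
  ∃ W : Set V,
    (∀ v, v ∉ W → IsLeaf G v ∧ ∃ w ∈ W, G.Adj w v) ∧
    (∀ w ∈ W, ∃! l, l ∉ W ∧ G.Adj w l) ∧
    (G.induce W).Connected


set_option linter.unusedSectionVars false
set_option maxHeartbeats 1600000

open Walk

universe u

def IsIndep (G : SimpleGraph V) (I : Set V) : Prop := ∀ a ∈ I, ∀ b ∈ I, ¬ G.Adj a b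

section basics
variable [Fintype V] (G : SimpleGraph V)

lemma domNum_le {D : Set V} (hD : IsDomSet G D) : domNum G ≤ D.ncard :=
  Nat.sInf_le ⟨D, hD, rfl⟩

lemma exists_min_dom : ∃ D : Set V, IsDomSet G D ∧ D.ncard = domNum G := by
  have hne : {n : ℕ | ∃ D : Set V, IsDomSet G D ∧ D.ncard = n}.Nonempty :=
    ⟨(Set.univ : Set V).ncard, Set.univ, fun v hv => absurd (Set.mem_univ v) hv, rfl⟩
  exact Nat.sInf_mem hne

lemma le_indepNum {I : Set V} (hI : IsIndep G I) : I.ncard ≤ _root_.indepNum G := by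
  apply le_csSup
  · refine ⟨Fintype.card V, ?_⟩
    rintro n ⟨J, _, rfl⟩
    simpa [Set.ncard_univ, Nat.card_eq_fintype_card] using Set.ncard_le_ncard (Set.subset_univ J) Set.finite_univ
  · exact ⟨I, hI, rfl⟩

lemma exists_max_indep : ∃ I : Set V, IsIndep G I ∧ I.ncard = _root_.indepNum G := by
  have h := Nat.sSup_mem (s := {n : ℕ | ∃ I : Set V, (∀ a ∈ I, ∀ b ∈ I, ¬ G.Adj a b) ∧ I.ncard = n})
    ⟨0, ∅, by simp, by simp⟩ ?_
  · exact h
  · refine ⟨Fintype.card V, ?_⟩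
    rintro n ⟨J, _, rfl⟩
    simpa [Set.ncard_univ, Nat.card_eq_fintype_card] using Set.ncard_le_ncard (Set.subset_univ J) Set.finite_univ

lemma domNum_le_indepNum : domNum G ≤ _root_.indepNum G := by
  obtain ⟨I, hI, hcard⟩ := exists_max_indep G
  have hdom : IsDomSet G I := by
    intro v hv
    by_contra hno
    push_neg at hno
    have hind : IsIndep G (insert v I) := by
      intro a ha b hb hadj
      rcases Set.mem_insert_iff.1 ha with ha' | ha' <;>
        rcases Set.mem_insert_iff.1 hb with hb' | hb'
      · exact hadj.ne (ha'.trans hb'.symm)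
      · exact hno b hb' (ha' ▸ hadj).symm
      · exact hno a ha' (hb' ▸ hadj)
      · exact hI a ha' b hb' hadj
    have := le_indepNum G hind
    rw [Set.ncard_insert_of_notMem hv, hcard] at this
    omega
  calc domNum G ≤ I.ncard := domNum_le G hdom
    _ = _root_.indepNum G := hcard



lemma max_indep_dom [Fintype V] (G : SimpleGraph V) {I : Set V} (hI : IsIndep G I)
    (hmax : I.ncard = _root_.indepNum G) : IsDomSet G I := by
  intro v hv
  by_contra hno
  push_neg at hno
  have hind : IsIndep G (insert v I) := by
    intro a ha b hb hadj
    rcases Set.mem_insert_iff.1 ha with ha' | ha' <;>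
      rcases Set.mem_insert_iff.1 hb with hb' | hb'
    · exact hadj.ne (ha'.trans hb'.symm)
    · exact hno b hb' (ha' ▸ hadj).symm
    · exact hno a ha' (hb' ▸ hadj)
    · exact hI a ha' b hb' hadj
  have := le_indepNum G hind
  rw [Set.ncard_insert_of_notMem hv (Set.toFinite _), hmax] at this
  omega
section s2
variable [Fintype V] (G : SimpleGraph V)

lemma IsLeaf.nbr_eq {G : SimpleGraph V} {l s : V} (hl : IsLeaf G l) (hs : G.Adj s l) :
    G.neighborSet l = {s} := by
  obtain ⟨a, ha⟩ := Set.ncard_eq_one.1 hl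
  have : s ∈ G.neighborSet l := hs.symm
  rw [ha] at this ⊢
  rw [Set.mem_singleton_iff.1 this]

lemma IsLeaf.adj_eq {G : SimpleGraph V} {l s u : V} (hl : IsLeaf G l) (hs : G.Adj s l)
    (hu : G.Adj l u) : u = s := by
  have := hl.nbr_eq hs
  have hu' : u ∈ G.neighborSet l := hu
  rw [this] at hu'
  exact hu'

/-- If `domNum = indepNum` then `G` has no strong stem. -/
lemma no_strong_stem (h : domNum G = _root_.indepNum G) (s : V) : ¬ IsStrongStem G s := by
  rintro ⟨x, y, hxy, hsx, hsy, hlx, hly⟩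
  obtain ⟨I, hI, hIcard⟩ := exists_max_indep G
  by_cases hsI : s ∈ I
  · -- replace s by x and y: bigger independent set, contradiction
    have hxI : x ∉ I := fun hx => hI s hsI x hx hsx
    have hyI : y ∉ I := fun hy => hI s hsI y hy hsy
    have hind : IsIndep G (insert x (insert y (I \ {s}))) := by
      have hnots : ∀ c ∈ insert x (insert y (I \ ({s} : Set V))), c ≠ s := by
        rintro c (rfl | rfl | hc)
        · exact fun h => hsx.ne h.symm
        · exact fun h => hsy.ne h.symm
        · exact hc.2
      intro a ha b hb hadj
      rcases ha with rfl | rfl | ha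
      · exact hnots b hb (hlx.adj_eq hsx hadj)
      · exact hnots b hb (hly.adj_eq hsy hadj)
      · rcases hb with rfl | rfl | hb
        · exact hnots a (Or.inr (Or.inr ha)) (hlx.adj_eq hsx hadj.symm)
        · exact hnots a (Or.inr (Or.inr ha)) (hly.adj_eq hsy hadj.symm)
        · exact hI a ha.1 b hb.1 hadj
    have hcard : (insert x (insert y (I \ {s}))).ncard = I.ncard + 1 := by
      have h1 : y ∉ I \ {s} := fun h => hyI h.1
      have h2 : x ∉ insert y (I \ {s}) := by
        rintro (rfl | h)
        · exact hxy rfl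
        · exact hxI h.1
      rw [Set.ncard_insert_of_notMem h2 (Set.Finite.insert _ (Set.toFinite _)),
        Set.ncard_insert_of_notMem h1 (Set.toFinite _),
        Set.ncard_diff_singleton_of_mem hsI]
      have : 0 < I.ncard := (Set.ncard_pos (Set.toFinite _)).2 ⟨s, hsI⟩
      omega
    have := le_indepNum G hind
    omega
  · -- x, y ∈ I by maximality; swap for s: smaller dominating set
    have hmem : ∀ c, G.Adj s c → IsLeaf G c → c ∈ I := by
      intro c hc hlc
      by_contra hcI
      have hind : IsIndep G (insert c I) := by
        intro a ha b hb hadj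
        rcases ha with rfl | ha' <;> rcases hb with rfl | hb'
        · exact hadj.ne rfl
        · exact hsI ((hlc.adj_eq hc hadj) ▸ hb')
        · exact hsI ((hlc.adj_eq hc hadj.symm) ▸ ha')
        · exact hI a ha' b hb' hadj
      have := le_indepNum G hind
      rw [Set.ncard_insert_of_notMem hcI (Set.toFinite _)] at this
      omega
    have hxI := hmem x hsx hlx
    have hyI := hmem y hsy hly
    have hIdom := max_indep_dom G hI hIcard
    have hdom : IsDomSet G (insert s (I \ {x, y})) := by
      intro v hv
      have hsD : s ∈ insert s (I \ ({x, y} : Set V)) := Set.mem_insert _ _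
      by_cases hvx : v = x
      · exact ⟨s, hsD, hvx ▸ hsx⟩
      by_cases hvy : v = y
      · exact ⟨s, hsD, hvy ▸ hsy⟩
      have hvI : v ∉ I := by
        intro hvmem
        exact hv (Set.mem_insert_iff.2 (Or.inr ⟨hvmem, by simp [hvx, hvy]⟩))
      obtain ⟨u, huI, huv⟩ := hIdom v hvI
      by_cases hux : u = x
      · exact absurd (hlx.adj_eq hsx (hux ▸ huv)) (by rintro rfl; exact hv hsD)
      by_cases huy : u = y
      · exact absurd (hly.adj_eq hsy (huy ▸ huv)) (by rintro rfl; exact hv hsD)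
      exact ⟨u, Set.mem_insert_iff.2 (Or.inr ⟨huI, by simp [hux, huy]⟩), huv⟩
    have hsub : ({x, y} : Set V) ⊆ I := by
      rintro c (rfl | rfl)
      exacts [hxI, hyI]
    have hIcard2 : 2 ≤ I.ncard := by
      calc 2 = ({x, y} : Set V).ncard := (Set.ncard_pair hxy).symm
        _ ≤ I.ncard := Set.ncard_le_ncard hsub (Set.toFinite _)
    have hD : (insert s (I \ ({x, y} : Set V))).ncard ≤ I.ncard - 1 := by
      have hsmem : s ∉ I \ ({x, y} : Set V) := fun hmem => hsI hmem.1
      rw [Set.ncard_insert_of_notMem hsmem (Set.toFinite _),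
        Set.ncard_diff hsub (Set.toFinite _), Set.ncard_pair hxy]
      omega
    have := domNum_le G hdom
    omega


section s3
variable [Fintype V] (G : SimpleGraph V)

/-- In a corona, every independent set injects into `W`. -/
lemma indep_le_W {W : Set V}
    (h1 : ∀ v, v ∉ W → IsLeaf G v ∧ ∃ w ∈ W, G.Adj w v)
    (h2 : ∀ w ∈ W, ∃! l, l ∉ W ∧ G.Adj w l)
    {I : Set V} (hI : IsIndep G I) : I.ncard ≤ W.ncard := by
  classical
  have hch : ∀ x, x ∉ W → ∃ w, w ∈ W ∧ G.Adj w x := by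
    intro x hx
    obtain ⟨_, w, hw, hadj⟩ := h1 x hx
    exact ⟨w, hw, hadj⟩
  set f : V → V := fun x => if hx : x ∈ W then x else (hch x hx).choose with hf
  have hfW : ∀ x, f x ∈ W := by
    intro x
    by_cases hx : x ∈ W
    · simp [hf, hx]
    · simp only [hf, dif_neg hx]
      exact (hch x hx).choose_spec.1
  have hfadj : ∀ x, x ∉ W → G.Adj (f x) x := by
    intro x hx
    simp only [hf, dif_neg hx]
    exact (hch x hx).choose_spec.2
  apply Set.ncard_le_ncard_of_injOn f (fun a _ => hfW a)
  · intro a ha b hb hab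
    by_cases haW : a ∈ W <;> by_cases hbW : b ∈ W
    · simpa [hf, haW, hbW] using hab
    · exfalso
      have : f b = a := by simpa [hf, haW] using hab.symm
      exact hI a ha b hb (this ▸ hfadj b hbW)
    · exfalso
      have : f a = b := by simpa [hf, hbW] using hab
      exact hI b hb a ha (this ▸ hfadj a haW)
    · obtain ⟨l0, _, hu⟩ := h2 (f a) (hfW a)
      have hae : a = l0 := hu a ⟨haW, hfadj a haW⟩
      have hbe : b = l0 := hu b ⟨hbW, hab ▸ hfadj b hbW⟩
      exact hae.trans hbe.symm

/-- In a corona, `W` injects into every dominating set. -/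
lemma W_le_dom {W : Set V}
    (h1 : ∀ v, v ∉ W → IsLeaf G v ∧ ∃ w ∈ W, G.Adj w v)
    (h2 : ∀ w ∈ W, ∃! l, l ∉ W ∧ G.Adj w l)
    {D : Set V} (hD : IsDomSet G D) : W.ncard ≤ D.ncard := by
  classical
  -- the pendant leaf of w
  have hl : ∀ w (hw : w ∈ W), ∃ l, l ∉ W ∧ G.Adj w l := fun w hw => (h2 w hw).exists
  set l : ∀ w, w ∈ W → V := fun w hw => (hl w hw).choose with hldef
  have hlspec : ∀ w (hw : w ∈ W), (l w hw ∉ W) ∧ G.Adj w (l w hw) :=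
    fun w hw => (hl w hw).choose_spec
  have hlnbr : ∀ w (hw : w ∈ W), G.neighborSet (l w hw) = {w} := by
    intro w hw
    exact ((h1 _ (hlspec w hw).1).1).nbr_eq (hlspec w hw).2
  set g : V → V := fun w => if hw : w ∈ W then (if w ∈ D then w else l w hw) else w with hg
  have hgD : ∀ w ∈ W, g w ∈ D := by
    intro w hw
    by_cases hwD : w ∈ D
    · simp [hg, hw, hwD]
    · simp only [hg, dif_pos hw, if_neg hwD]
      by_contra hlD
      obtain ⟨u, huD, hadj⟩ := hD _ hlD
      have : u ∈ G.neighborSet (l w hw) := hadj.symm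
      rw [hlnbr w hw] at this
      exact hwD (this ▸ huD)
  have hgval : ∀ w (hw : w ∈ W), g w = w ∨ (g w = l w hw ∧ w ∉ D) := by
    intro w hw
    by_cases hwD : w ∈ D
    · left; simp [hg, hw, hwD]
    · right; exact ⟨by simp [hg, hw, hwD], hwD⟩
  apply Set.ncard_le_ncard_of_injOn g hgD
  · intro a ha b hb hab
    rcases hgval a ha with hga | ⟨hga, haD⟩ <;> rcases hgval b hb with hgb | ⟨hgb, hbD⟩
    · rw [hga, hgb] at hab; exact hab
    · exfalso
      rw [hga, hgb] at hab
      exact (hlspec b hb).1 (hab ▸ ha)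
    · exfalso
      rw [hga, hgb] at hab
      exact (hlspec a ha).1 (hab.symm ▸ hb)
    · rw [hga, hgb] at hab
      -- l a = l b implies a = b since the leaf has unique neighbor
      have : b ∈ G.neighborSet (l a ha) := by
        rw [hab]; exact (hlspec b hb).2.symm
      rw [hlnbr a ha] at this
      exact this.symm

/-- Corona implies `domNum = indepNum`. -/
lemma corona_gamma_alpha (hc : IsCorona G) : domNum G = _root_.indepNum G := by
  obtain ⟨W, h1, h2, _⟩ := hc
  obtain ⟨I, hI, hIc⟩ := exists_max_indep G
  obtain ⟨D, hD, hDc⟩ := exists_min_dom G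
  have h3 := indep_le_W G h1 h2 hI
  have h4 := W_le_dom G h1 h2 hD
  have h5 := domNum_le_indepNum G
  omega

/-- In a corona, `W` injects into its complement. -/
lemma W_le_compl {W : Set V}
    (h1 : ∀ v, v ∉ W → IsLeaf G v ∧ ∃ w ∈ W, G.Adj w v)
    (h2 : ∀ w ∈ W, ∃! l, l ∉ W ∧ G.Adj w l) : W.ncard ≤ Wᶜ.ncard := by
  classical
  have hl : ∀ w (hw : w ∈ W), ∃ l, l ∉ W ∧ G.Adj w l := fun w hw => (h2 w hw).exists
  set l : V → V := fun w => if hw : w ∈ W then (hl w hw).choose else w with hldef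
  have hlspec : ∀ w (hw : w ∈ W), (l w ∉ W) ∧ G.Adj w (l w) := by
    intro w hw
    simp only [hldef, dif_pos hw]
    exact (hl w hw).choose_spec
  apply Set.ncard_le_ncard_of_injOn l (fun a ha => (hlspec a ha).1)
  · intro a ha b hb hab
    have h1a := (h1 _ (hlspec a ha).1).1
    have : b ∈ G.neighborSet (l a) := by
      rw [hab]; exact (hlspec b hb).2.symm
    rw [h1a.nbr_eq (hlspec a ha).2] at this
    exact this.symm


section toolbox
variable {G : SimpleGraph V}

lemma reachable_induce {S : Set V} : ∀ {a b : V} (p : G.Walk a b),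
    (∀ x ∈ p.support, x ∈ S) → ∀ (ha : a ∈ S) (hb : b ∈ S),
    (G.induce S).Reachable ⟨a, ha⟩ ⟨b, hb⟩ := by
  intro a b p
  induction p with
  | nil => intro _ ha hb; exact Reachable.refl _
  | @cons a c b h q ih =>
    intro hsup ha hb
    have hc : c ∈ S := hsup c (by simp)
    have hadj : (G.induce S).Adj ⟨a, ha⟩ ⟨c, hc⟩ := by
      simp only [comap_adj, Function.Embedding.coe_subtype]
      exact h
    exact (hadj.reachable).trans (ih (fun x hx => hsup x (by simp [hx])) hc hb)

lemma interior_two_nbrs : ∀ {a b x : V} (p : G.Walk a b), p.IsPath → x ∈ p.support →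
    x ≠ a → x ≠ b →
    ∃ y z, y ≠ z ∧ y ∈ p.support ∧ z ∈ p.support ∧ G.Adj x y ∧ G.Adj x z := by
  intro a b x p
  induction p with
  | nil => intro _ hx hxa _; simp at hx; exact absurd hx hxa
  | @cons a c b h q ih =>
    intro hp hx hxa hxb
    have hq : q.IsPath := hp.of_cons
    have hx' : x ∈ q.support := by
      have hx2 : x ∈ a :: q.support := support_cons h q ▸ hx
      rcases List.mem_cons.1 hx2 with h' | h'
      · exact absurd h' hxa
      · exact h'
    by_cases hxc : x = c
    · subst hxc
      cases q with
      | nil => exact absurd rfl hxb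
      | @cons c c2 b h2 q2 =>
        refine ⟨a, c2, ?_, by simp, ?_, h.symm, h2⟩
        · rintro rfl
          have := (cons_isPath_iff h _).1 hp
          exact this.2 (by simp)
        · simp
    · obtain ⟨y, z, hyz, hy, hz, hxy, hxz⟩ := ih hq hx' hxc hxb
      exact ⟨y, z, hyz, by simp [hy], by simp [hz], hxy, hxz⟩

lemma leaf_not_interior {a b l : V} (p : G.Walk a b) (hp : p.IsPath)
    (hl : IsLeaf G l) (hla : l ≠ a) (hlb : l ≠ b) (hmem : l ∈ p.support) : False := by
  obtain ⟨y, z, hyz, _, _, hly, hlz⟩ := interior_two_nbrs p hp hmem hla hlb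
  obtain ⟨c, hc⟩ := Set.ncard_eq_one.1 hl
  have h1 : y ∈ G.neighborSet l := hly
  have h2 : z ∈ G.neighborSet l := hlz
  rw [hc] at h1 h2
  exact hyz (h1.trans h2.symm)

lemma isPath_concat {a b c : V} {p : G.Walk a b} (hp : p.IsPath) (h : G.Adj b c)
    (hc : c ∉ p.support) : (p.concat h).IsPath := by
  rw [← isPath_reverse_iff, reverse_concat]
  refine (cons_isPath_iff _ _).2 ⟨isPath_reverse_iff _ |>.2 hp, ?_⟩
  rw [support_reverse]
  simpa using hc

lemma dist_adj_le (hconn : G.Connected) {r a b : V} (h : G.Adj a b) :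
    G.dist r b ≤ G.dist r a + 1 := by
  have h1 := hconn.dist_triangle (u := r) (v := a) (w := b)
  have h2 : G.dist a b ≤ 1 := by
    have := dist_le (Walk.cons h Walk.nil)
    simpa using this
  omega

/-- every vertex on a shortest path is within distance `length` of the start -/
lemma dist_le_of_mem_support {r a z : V} (p : G.Walk r a) (hz : z ∈ p.support) :
    G.dist r z ≤ p.length := by
  classical
  have h1 := dist_le (p.takeUntil z hz)
  have h2 := length_takeUntil_le p hz
  omega

/-- in a tree, adjacent vertices are at different distances from any root -/
lemma tree_adj_dist_ne (hT : G.IsTree) {r a b : V} (h : G.Adj a b) :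
    G.dist r a ≠ G.dist r b := by
  classical
  intro heq
  have hconn := hT.isConnected
  obtain ⟨pa, hpa, hla⟩ := hconn.exists_path_of_dist r a
  obtain ⟨pb, hpb, hlb⟩ := hconn.exists_path_of_dist r b
  by_cases hbs : b ∈ pa.support
  · -- dist r b < dist r a, contradiction
    have h1 := dist_le (pa.takeUntil b hbs)
    have h2 := length_takeUntil_le pa hbs
    have h3 : (pa.takeUntil b hbs).length ≠ pa.length := by
      intro hlen
      have hspec := pa.take_spec hbs
      have := congr_arg Walk.length hspec
      rw [Walk.length_append] at this
      have hdrop : (pa.dropUntil b hbs).length = 0 := by omega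
      exact h.ne' (Walk.eq_of_length_eq_zero hdrop)
    omega
  · have hcat : (pa.concat h).IsPath := isPath_concat hpa h hbs
    have huniq := hT.existsUnique_path r b
    have heqp : pa.concat h = pb := huniq.unique hcat hpb
    have := congr_arg Walk.length heqp
    rw [Walk.length_concat] at this
    omega

/-- in a tree, each vertex other than the root has a unique neighbor closer to the root -/
lemma tree_unique_parent (hT : G.IsTree) {r x : V} (hx : x ≠ r) :
    ∃! y, G.Adj x y ∧ G.dist r y + 1 = G.dist r x := by
  have hconn := hT.isConnected
  have hpos : 0 < G.dist r x := hconn.pos_dist_of_ne (Ne.symm hx)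
  obtain ⟨p, hp, hl⟩ := hconn.exists_path_of_dist r x
  -- penultimate vertex
  obtain ⟨y, h, q, hq⟩ : ∃ (y : V) (h : G.Adj x y) (q : G.Walk y r), q.length + 1 = G.dist r x := by
    cases hrev : p.reverse with
    | nil =>
      exfalso
      have : p.length = 0 := by
        have := congr_arg Walk.length hrev
        simp only [Walk.length_reverse] at this
        simpa using this
      omega
    | cons hadj q => exact ⟨_, hadj, q, by
        have := congr_arg Walk.length hrev
        rw [Walk.length_reverse] at this
        simp only [Walk.length_cons] at this
        omega⟩
  have hyd : G.dist r y + 1 = G.dist r x := by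
    have h1 : G.dist r y ≤ q.length := by
      have := dist_le q.reverse
      simpa using this
    have h2 := dist_adj_le hconn (r := r) h.symm
    have h3 := dist_adj_le hconn (r := r) h
    have h4 := tree_adj_dist_ne hT (r := r) h
    omega
  refine ⟨y, ⟨h, hyd⟩, ?_⟩
  -- uniqueness
  rintro z ⟨hzadj, hzd⟩
  -- build two paths from r to x through z resp. y and use uniqueness
  have key : ∀ w, G.Adj x w → G.dist r w + 1 = G.dist r x →
      ∃ (pw : G.Walk r x), pw.IsPath ∧ ∃ (pw' : G.Walk r w) (hadj : G.Adj w x),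
        pw'.IsPath ∧ pw = pw'.concat hadj := by
    intro w hw hwd
    obtain ⟨pw, hpw, hlw⟩ := hconn.exists_path_of_dist r w
    have hxs : x ∉ pw.support := by
      intro hmem
      have := dist_le_of_mem_support pw hmem
      omega
    exact ⟨pw.concat hw.symm, isPath_concat hpw hw.symm hxs, pw, hw.symm, hpw, rfl⟩
  obtain ⟨p1, hp1, q1, ha1, hq1, he1⟩ := key z hzadj hzd
  obtain ⟨p2, hp2, q2, ha2, hq2, he2⟩ := key y h hyd
  have huniq := hT.existsUnique_path r x
  have : p1 = p2 := huniq.unique hp1 hp2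
  rw [he1, he2] at this
  obtain ⟨hv, -⟩ := Walk.concat_inj this
  exact hv


section tool2
variable {G : SimpleGraph V}

lemma isAcyclic_induce (h : G.IsAcyclic) (S : Set V) : (G.induce S).IsAcyclic := by
  intro x c hc
  let f : G.induce S →g G := ⟨Subtype.val, fun hadj => hadj⟩
  have hinj : Function.Injective (⇑f) := by
    intro a b hab
    exact Subtype.ext hab
  exact h (c.map f) (hc.map hinj)

lemma max_dist_nbr (hT : G.IsTree) {r v : V}
    (hmax : ∀ w, G.dist r w ≤ G.dist r v) (hvr : v ≠ r) :
    ∃ s, G.neighborSet v = {s} ∧ G.dist r s + 1 = G.dist r v := by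
  obtain ⟨y, ⟨hy, hyd⟩, huniq⟩ := tree_unique_parent hT hvr
  refine ⟨y, ?_, hyd⟩
  ext z
  simp only [mem_neighborSet, Set.mem_singleton_iff]
  constructor
  · intro hz
    have h1 := hmax z
    have h2 := tree_adj_dist_ne hT (r := r) hz
    have h3 := dist_adj_le hT.isConnected (r := r) hz.symm
    exact huniq z ⟨hz, by omega⟩
  · rintro rfl; exact hy

/-- Main structural lemma: in a weak tree with at least 3 vertices there are
`v s u` with `N(v) = {s}`, `N(s) = {v, u}`. -/
lemma weak_tree_structure [Fintype V] (hT : G.IsTree) (hcard : 3 ≤ Fintype.card V)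
    (hweak : ∀ x, ¬ IsStrongStem G x) :
    ∃ v s u : V, G.neighborSet v = {s} ∧ G.neighborSet s = {v, u} ∧
      v ≠ u ∧ s ≠ u ∧ v ≠ s := by
  classical
  have hconn := hT.isConnected
  have hne : Nonempty V := Fintype.card_pos_iff.1 (by omega)
  obtain ⟨r0⟩ := hne
  -- a first farthest vertex: it is a leaf, call it r
  obtain ⟨r, -, hrmax⟩ := Finset.exists_max_image Finset.univ (G.dist r0) ⟨r0, Finset.mem_univ r0⟩
  have hrmax : ∀ w, G.dist r0 w ≤ G.dist r0 r := fun w => hrmax w (Finset.mem_univ w)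
  have hrr0 : r ≠ r0 := by
    obtain ⟨w, hw⟩ : ∃ w : V, w ≠ r0 := by
      by_contra hall
      push_neg at hall
      have : Fintype.card V ≤ 1 := Fintype.card_le_one_iff.2 (fun a b => (hall a).trans (hall b).symm)
      omega
    have hpos := hconn.pos_dist_of_ne (Ne.symm hw)
    have := hrmax w
    intro hrfl
    rw [hrfl, SimpleGraph.dist_self] at this
    omega
  obtain ⟨t, hrt, -⟩ := max_dist_nbr hT hrmax hrr0
  have hrleaf : IsLeaf G r := by rw [IsLeaf, hrt]; simp
  -- now farthest vertex from r
  obtain ⟨v, -, hvmax⟩ := Finset.exists_max_image Finset.univ (G.dist r) ⟨r, Finset.mem_univ r⟩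
  have hvmax : ∀ w, G.dist r w ≤ G.dist r v := fun w => hvmax w (Finset.mem_univ w)
  have hvr : v ≠ r := by
    obtain ⟨w, hw⟩ : ∃ w : V, w ≠ r := by
      by_contra hall
      push_neg at hall
      have : Fintype.card V ≤ 1 := Fintype.card_le_one_iff.2 (fun a b => (hall a).trans (hall b).symm)
      omega
    have hpos := hconn.pos_dist_of_ne (Ne.symm hw)
    have := hvmax w
    intro hrfl
    rw [hrfl, SimpleGraph.dist_self] at this
    omega
  obtain ⟨s, hvs, hsd⟩ := max_dist_nbr hT hvmax hvr
  have hsadj : G.Adj v s := by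
    have : s ∈ G.neighborSet v := by rw [hvs]; rfl
    exact this
  -- d ≥ 2
  have hd2 : 2 ≤ G.dist r v := by
    by_contra hlt
    push_neg at hlt
    have hsub : (Set.univ : Set V) ⊆ {r, t} := by
      intro w _
      by_cases hwr : w = r
      · exact Or.inl hwr
      · have h1 := hvmax w
        have hpos := hconn.pos_dist_of_ne (Ne.symm hwr)
        have hw1 : G.dist r w = 1 := by omega
        have hadj : G.Adj r w := dist_eq_one_iff_adj.1 hw1
        have : w ∈ G.neighborSet r := hadj
        rw [hrt] at this
        exact Or.inr this
    have := Set.ncard_le_ncard hsub (Set.toFinite _)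
    rw [Set.ncard_univ, Nat.card_eq_fintype_card] at this
    have h2 : ({r, t} : Set V).ncard ≤ 2 := by
      apply le_trans (Set.ncard_insert_le _ _)
      simp
    omega
  have hsr : s ≠ r := by
    intro hrfl
    rw [hrfl, SimpleGraph.dist_self] at hsd
    omega
  -- parent u of s
  obtain ⟨u, ⟨hsu, hud⟩, hupar⟩ := tree_unique_parent hT (r := r) hsr
  have hvu : v ≠ u := by
    intro hrfl
    rw [← hrfl] at hud
    omega
  have hvns : v ≠ s := hsadj.ne
  have hsnu : s ≠ u := hsu.ne
  refine ⟨v, s, u, hvs, ?_, hvu, hsnu, hvns⟩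
  -- N(s) = {v, u}
  ext z
  simp only [mem_neighborSet, Set.mem_insert_iff, Set.mem_singleton_iff]
  constructor
  · intro hz
    have h1 := hvmax z
    have h2 := tree_adj_dist_ne hT (r := r) hz
    have h3 := dist_adj_le hconn (r := r) hz.symm
    have h4 := dist_adj_le hconn (r := r) hz
    -- dist r z = d - 2 or d
    by_cases hcase : G.dist r z + 1 = G.dist r s
    · right; exact hupar z ⟨hz, hcase⟩
    · left
      have hzd : G.dist r z = G.dist r v := by omega
      -- z is at max distance; its unique closer neighbor is s, so z is a leaf
      have hzr : z ≠ r := by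
        intro hrfl
        rw [hrfl, SimpleGraph.dist_self] at hzd
        omega
      have hzmax : ∀ w, G.dist r w ≤ G.dist r z := fun w => hzd ▸ hvmax w
      obtain ⟨s', hzs', -⟩ := max_dist_nbr hT hzmax hzr
      have hss' : s' = s := by
        have : s ∈ G.neighborSet z := hz.symm
        rw [hzs'] at this
        exact this.symm
      -- z is a leaf adjacent to s; v is a leaf adjacent to s
      by_contra hzv
      apply hweak s
      refine ⟨z, v, fun hzz => hzv hzz, hz, hsadj.symm, ?_, ?_⟩
      · rw [IsLeaf, hzs']; simp
      · rw [IsLeaf, hvs]; simp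
  · rintro (rfl | rfl)
    · exact hsadj.symm
    · exact hsu


section main

lemma induceAdj {G : SimpleGraph V} {S : Set V} {a b : ↥S} :
    (G.induce S).Adj a b ↔ G.Adj ↑a ↑b := by
  simp [comap_adj]

lemma card_coe (S : Set V) [Fintype ↥S] : Fintype.card ↥S = S.ncard := by
  rw [← Nat.card_coe_set_eq, Nat.card_eq_fintype_card]

/-- transfer of leaf property to induced subgraph -/
lemma leaf_induce {G : SimpleGraph V} {S : Set V} {x : ↥S}
    (hsub : G.neighborSet ↑x ⊆ S) : IsLeaf (G.induce S) x ↔ IsLeaf G ↑x := by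
  have himg : Subtype.val '' ((G.induce S).neighborSet x) = G.neighborSet ↑x := by
    ext z
    simp only [Set.mem_image, mem_neighborSet]
    constructor
    · rintro ⟨y, hy, rfl⟩
      exact induceAdj.1 hy
    · intro hz
      exact ⟨⟨z, hsub hz⟩, induceAdj.2 hz, rfl⟩
  unfold IsLeaf
  rw [← himg, Set.ncard_image_of_injective _ Subtype.val_injective]

/-- the forward direction, by strong induction on the number of vertices -/
theorem forward_aux : ∀ (n : ℕ), ∀ {V : Type u} [Fintype V] (T : SimpleGraph V),
    T.IsTree → Fintype.card V = n → 2 ≤ n → domNum T = _root_.indepNum T → IsCorona T := by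
  intro n
  induction n using Nat.strong_induction_on with
  | _ n ih =>
  intro V _ T hT hcard h2 heq
  classical
  have hconn := hT.isConnected
  by_cases hn2 : n = 2
  · -- base case : T = K₂
    subst hn2
    obtain ⟨a, b, hab, huniv⟩ := (@Nat.card_eq_two_iff V).1 (by rw [Nat.card_eq_fintype_card]; exact hcard)
    have huniv : (Set.univ : Set V) = {a, b} := huniv.symm
    have hadj : T.Adj a b := by
      have hreach := hconn a b
      obtain ⟨p, hp, hl⟩ := hreach.exists_path_of_dist
      have hpos : 0 < T.dist a b := hconn.pos_dist_of_ne hab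
      have hle : T.dist a b ≤ 1 := by
        have hnodup := hp.support_nodup
        have hlen : p.support.length = p.length + 1 := Walk.length_support p
        have hcardle : p.support.length ≤ Fintype.card V := List.Nodup.length_le_card hnodup
        omega
      have : T.dist a b = 1 := by omega
      exact dist_eq_one_iff_adj.1 this
    have hnb : T.neighborSet b = {a} := by
      ext z
      simp only [mem_neighborSet, Set.mem_singleton_iff]
      constructor
      · intro hz
        have : z ∈ (Set.univ : Set V) := Set.mem_univ z
        rw [huniv] at this
        rcases this with rfl | rfl
        · rfl
        · exact absurd rfl hz.ne'
      · rintro rfl; exact hadj.symm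
    refine ⟨{a}, ?_, ?_, ?_⟩
    · intro x hx
      have hxb : x = b := by
        have : x ∈ (Set.univ : Set V) := Set.mem_univ x
        rw [huniv] at this
        rcases this with rfl | rfl
        · exact absurd rfl hx
        · rfl
      subst hxb
      exact ⟨by rw [IsLeaf, hnb]; simp, a, rfl, hadj⟩
    · rintro w rfl
      refine ⟨b, ⟨by simpa using Ne.symm hab, hadj⟩, ?_⟩
      rintro l ⟨hl1, hl2⟩
      have : l ∈ (Set.univ : Set V) := Set.mem_univ l
      rw [huniv] at this
      rcases this with rfl | rfl
      · exact absurd rfl hl1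
      · rfl
    · rw [connected_iff]
      refine ⟨?_, ⟨⟨a, rfl⟩⟩⟩
      intro x y
      have hx := x.2
      have hy := y.2
      have : x = y := Subtype.ext (hx.trans hy.symm)
      rw [this]
  · -- inductive step: n ≥ 3
    have h3 : 3 ≤ n := by omega
    have hweak := no_strong_stem T heq
    obtain ⟨v, s, u, hvnb, hsnb, hvu, hsu, hvs⟩ :=
      weak_tree_structure hT (hcard ▸ h3) hweak
    have hadj_sv : T.Adj s v := by
      have : s ∈ T.neighborSet v := by rw [hvnb]; rfl
      exact this.symm
    have hadj_su : T.Adj s u := by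
      have : u ∈ T.neighborSet s := by rw [hsnb]; simp
      exact this
    have hvleaf : IsLeaf T v := by rw [IsLeaf, hvnb]; simp
    -- the complement of {v, s}
    set Vs : Set V := ({v, s} : Set V)ᶜ with hVs
    have huVs : u ∈ Vs := by
      simp only [hVs, Set.mem_compl_iff, Set.mem_insert_iff, Set.mem_singleton_iff]
      push_neg
      exact ⟨fun h => hvu h.symm, fun h => hsu h.symm⟩
    have hvVs : v ∉ Vs := by simp [hVs]
    have hsVs : s ∉ Vs := by simp [hVs]
    haveI : Fintype ↥Vs := (Set.toFinite Vs).fintype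
    set T' : SimpleGraph ↥Vs := T.induce Vs with hT'
    -- cardinality
    have hcardVs : Fintype.card ↥Vs = n - 2 := by
      rw [card_coe]
      have : Vs = Set.univ \ ({v, s} : Set V) := by
        rw [hVs, Set.compl_eq_univ_diff]
      rw [this, Set.ncard_diff (Set.subset_univ _) (Set.toFinite _), Set.ncard_univ,
        Nat.card_eq_fintype_card, hcard, Set.ncard_pair hvs]
    -- membership of neighbor sets
    have hnbr_sub : ∀ x : ↥Vs, ↑x ≠ u → T.neighborSet ↑x ⊆ Vs := by
      rintro ⟨x, hx⟩ hxu y hy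
      simp only [hVs, Set.mem_compl_iff, Set.mem_insert_iff, Set.mem_singleton_iff]
      push_neg
      constructor
      · intro hyv
        subst hyv
        have : x ∈ T.neighborSet y := hy.symm
        rw [hvnb] at this
        exact hsVs (this ▸ hx)
      · intro hys
        subst hys
        have : x ∈ T.neighborSet y := hy.symm
        rw [hsnb] at this
        rcases this with rfl | rfl
        · exact hvVs hx
        · exact hxu rfl
    -- T' is a tree
    have htree' : T'.IsTree := by
      constructor
      · rw [connected_iff]
        constructor
        · rintro ⟨a, ha⟩ ⟨b, hb⟩
          obtain ⟨p, hp, -⟩ := (hconn a b).exists_path_of_dist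
          have hsup : ∀ x ∈ p.support, x ∈ Vs := by
            intro x hx
            by_contra hxVs
            simp only [hVs, Set.mem_compl_iff, not_not, Set.mem_insert_iff,
              Set.mem_singleton_iff] at hxVs
            have hva : v ≠ a := fun h => hvVs (h ▸ ha)
            have hvb : v ≠ b := fun h => hvVs (h ▸ hb)
            rcases hxVs with rfl | rfl
            · exact leaf_not_interior p hp hvleaf hva hvb hx
            · -- x = s : s interior implies v on the path
              have hsa : x ≠ a := fun h => hsVs (h ▸ ha)
              have hsb : x ≠ b := fun h => hsVs (h ▸ hb)
              obtain ⟨y, z, hyz, hy, hz, hxy, hxz⟩ := interior_two_nbrs p hp hx hsa hsb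
              have hymem : y ∈ T.neighborSet x := hxy
              have hzmem : z ∈ T.neighborSet x := hxz
              rw [hsnb] at hymem hzmem
              have hvmem : v ∈ p.support := by
                rcases hymem with rfl | rfl
                · exact hy
                · rcases hzmem with rfl | rfl
                  · exact hz
                  · exact absurd rfl hyz
              exact leaf_not_interior p hp hvleaf hva hvb hvmem
          exact reachable_induce p hsup ha hb
        · exact ⟨⟨u, huVs⟩⟩
      · exact isAcyclic_induce hT.2 Vs
    -- domination and independence transfer
    have hclaim1 : domNum T ≤ domNum T' + 1 := by
      obtain ⟨D', hD', hD'c⟩ := exists_min_dom T'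
      have hdom : IsDomSet T (insert s (Subtype.val '' D')) := by
        intro x hx
        have hxs : x ≠ s := fun h => hx (h ▸ Set.mem_insert _ _)
        by_cases hxv : x = v
        · exact ⟨s, Set.mem_insert _ _, hxv ▸ hadj_sv⟩
        · have hxVs : x ∈ Vs := by
            simp only [hVs, Set.mem_compl_iff, Set.mem_insert_iff, Set.mem_singleton_iff]
            push_neg
            exact ⟨hxv, hxs⟩
          have hxD' : (⟨x, hxVs⟩ : ↥Vs) ∉ D' := by
            intro hmem
            exact hx (Set.mem_insert_iff.2 (Or.inr ⟨_, hmem, rfl⟩))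
          obtain ⟨y, hy, hyadj⟩ := hD' _ hxD'
          exact ⟨↑y, Set.mem_insert_iff.2 (Or.inr ⟨y, hy, rfl⟩), induceAdj.1 hyadj⟩
      have hle := domNum_le T hdom
      have : (insert s (Subtype.val '' D')).ncard ≤ D'.ncard + 1 := by
        have h1 := Set.ncard_insert_le s (Subtype.val '' D')
        rw [Set.ncard_image_of_injective _ Subtype.val_injective] at h1
        exact h1
      omega
    have hclaim2 : _root_.indepNum T' + 1 ≤ _root_.indepNum T := by
      obtain ⟨I', hI', hI'c⟩ := exists_max_indep T'
      have hind : IsIndep T (insert v (Subtype.val '' I')) := by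
        intro a ha b hb hadj
        have hkey : ∀ c, c ∈ Subtype.val '' I' → ¬ T.Adj v c := by
          rintro c ⟨c', hc', rfl⟩ hadjc
          have : ↑c' ∈ T.neighborSet v := hadjc
          rw [hvnb] at this
          exact hsVs (this ▸ c'.2)
        rcases ha with rfl | ha' <;> rcases hb with rfl | hb'
        · exact hadj.ne rfl
        · exact hkey b hb' hadj
        · exact hkey a ha' hadj.symm
        · obtain ⟨a', ha'', rfl⟩ := ha'
          obtain ⟨b', hb'', rfl⟩ := hb'
          exact hI' a' ha'' b' hb'' (induceAdj.2 hadj)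
      have hle := le_indepNum T hind
      have hvim : v ∉ Subtype.val '' I' := by
        rintro ⟨c', -, hc⟩
        exact hvVs (hc ▸ c'.2)
      rw [Set.ncard_insert_of_notMem hvim (Set.toFinite _),
        Set.ncard_image_of_injective _ Subtype.val_injective, hI'c] at hle
      omega
    -- rule out n = 3
    have hn3 : n ≠ 3 := by
      intro hEq3
      apply hweak s
      have hc3 : ({v, s, u} : Set V).ncard = 3 := by
        rw [Set.ncard_insert_of_notMem (by simp [hvs, hvu]) (Set.toFinite _),
          Set.ncard_pair hsu]
      have huniv : (Set.univ : Set V) = {v, s, u} := by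
        symm
        apply Set.eq_of_subset_of_ncard_le (Set.subset_univ _)
        rw [Set.ncard_univ, Nat.card_eq_fintype_card, hcard, hEq3, hc3]
      have hunb : T.neighborSet u = {s} := by
        ext z
        simp only [mem_neighborSet, Set.mem_singleton_iff]
        constructor
        · intro hz
          have hzuniv : z ∈ (Set.univ : Set V) := Set.mem_univ z
          rw [huniv] at hzuniv
          rcases hzuniv with rfl | rfl | rfl
          · exfalso
            have : u ∈ T.neighborSet z := hz.symm
            rw [hvnb] at this
            exact hsu (Set.mem_singleton_iff.1 this).symm
          · rfl
          · exact absurd rfl hz.ne'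
        · rintro rfl; exact hadj_su.symm
      exact ⟨v, u, hvu, hadj_sv, hadj_su, hvleaf, by rw [IsLeaf, hunb]; simp⟩
    have h4 : 4 ≤ n := by omega
    -- equality for T'
    have heq' : domNum T' = _root_.indepNum T' := by
      have := domNum_le_indepNum T'
      omega
    -- apply induction hypothesis
    have hcorona' : IsCorona T' :=
      ih (n - 2) (by omega) T' htree' (by omega) (by omega) heq'
    obtain ⟨W', hh1, hh2, hconn'⟩ := hcorona'
    set W'v : Set V := Subtype.val '' W' with hW'v
    have hW'sub : W'v ⊆ Vs := by
      rintro x ⟨x', -, rfl⟩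
      exact x'.2
    by_cases huW : u ∈ W'v
    · -- main case : attach the pair (s, v) to the corona of T'
      have huW' : (⟨u, huVs⟩ : ↥Vs) ∈ W' := by
        obtain ⟨u', hu'W, hu'val⟩ := huW
        have : u' = ⟨u, huVs⟩ := Subtype.ext hu'val
        exact this ▸ hu'W
      refine ⟨insert s W'v, ?_, ?_, ?_⟩
      · -- condition 1
        intro x hx
        have hxs : x ≠ s := fun h => hx (h ▸ Set.mem_insert _ _)
        have hxW'v : x ∉ W'v := fun h => hx (Set.mem_insert_of_mem _ h)
        by_cases hxv : x = v
        · subst hxv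
          exact ⟨hvleaf, s, Set.mem_insert _ _, hadj_sv⟩
        · have hxVs : x ∈ Vs := by
            simp only [hVs, Set.mem_compl_iff, Set.mem_insert_iff, Set.mem_singleton_iff]
            push_neg
            exact ⟨hxv, hxs⟩
          have hxW' : (⟨x, hxVs⟩ : ↥Vs) ∉ W' := fun h => hxW'v ⟨_, h, rfl⟩
          obtain ⟨hxleaf', w', hw', hadjw'⟩ := hh1 _ hxW'
          have hxu : x ≠ u := fun h => hxW'v (h ▸ ⟨⟨u, huVs⟩, huW', rfl⟩)
          have hsub := hnbr_sub ⟨x, hxVs⟩ hxu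
          exact ⟨(leaf_induce hsub).1 hxleaf', ↑w',
            Set.mem_insert_of_mem _ ⟨w', hw', rfl⟩, induceAdj.1 hadjw'⟩
      · -- condition 2
        intro w hw
        rcases Set.mem_insert_iff.1 hw with rfl | hwv
        · refine ⟨v, ⟨?_, hadj_sv⟩, ?_⟩
          · intro hvmem
            rcases Set.mem_insert_iff.1 hvmem with h | h
            · exact hvs h
            · exact hvVs (hW'sub h)
          · rintro m ⟨hm1, hm2⟩
            have : m ∈ T.neighborSet w := hm2
            rw [hsnb] at this
            rcases this with rfl | rfl
            · rfl
            · have hmem : m ∈ W'v := ⟨⟨m, huVs⟩, huW', rfl⟩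
              exact absurd (Set.mem_insert_of_mem w hmem) hm1
        · obtain ⟨w', hw'W, rfl⟩ := hwv
          obtain ⟨l', ⟨hl'W, hl'adj⟩, hl'uniq⟩ := hh2 w' hw'W
          refine ⟨↑l', ⟨?_, induceAdj.1 hl'adj⟩, ?_⟩
          · intro hmem
            rcases Set.mem_insert_iff.1 hmem with h | h
            · exact hsVs (h ▸ l'.2)
            · obtain ⟨l'', hl'', hval⟩ := h
              exact hl'W ((Subtype.ext hval : l'' = l') ▸ hl'')
          · rintro m ⟨hm1, hm2⟩
            have hms : m ≠ s := fun h => hm1 (h ▸ Set.mem_insert _ _)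
            have hmv : m ≠ v := by
              rintro rfl
              have : (w' : V) ∈ T.neighborSet m := hm2.symm
              rw [hvnb] at this
              exact hsVs (this ▸ w'.2)
            have hmVs : m ∈ Vs := by
              simp only [hVs, Set.mem_compl_iff, Set.mem_insert_iff, Set.mem_singleton_iff]
              push_neg
              exact ⟨hmv, hms⟩
            have hmW' : (⟨m, hmVs⟩ : ↥Vs) ∉ W' :=
              fun h => hm1 (Set.mem_insert_of_mem _ ⟨_, h, rfl⟩)
            have := hl'uniq ⟨m, hmVs⟩ ⟨hmW', induceAdj.2 hm2⟩
            exact congr_arg Subtype.val this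
      · -- condition 3 : connectivity
        have hsW : s ∈ insert s W'v := Set.mem_insert _ _
        have huWm : u ∈ insert s W'v := Set.mem_insert_of_mem _ ⟨⟨u, huVs⟩, huW', rfl⟩
        let F : (T'.induce W') →g T.induce (insert s W'v) :=
          ⟨fun x => ⟨↑↑x, Set.mem_insert_of_mem _ ⟨↑x, x.2, rfl⟩⟩, by
            intro p q hpq
            exact induceAdj.2 (induceAdj.1 (induceAdj.1 hpq))⟩
        have hreach : ∀ a : ↥(insert s W'v : Set V),
            (T.induce (insert s W'v)).Reachable a ⟨u, huWm⟩ := by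
          rintro ⟨a, ha⟩
          rcases Set.mem_insert_iff.1 ha with rfl | haW
          · exact (induceAdj.2 hadj_su).reachable
          · obtain ⟨a', ha'W, rfl⟩ := haW
            have hr := hconn'.preconnected ⟨a', ha'W⟩ ⟨⟨u, huVs⟩, huW'⟩
            exact hr.map F
        rw [connected_iff]
        exact ⟨fun a b => (hreach a).trans (hreach b).symm, ⟨⟨s, hsW⟩⟩⟩
    · -- case u ∉ W'v
      have huW' : (⟨u, huVs⟩ : ↥Vs) ∉ W' := fun h => huW ⟨_, h, rfl⟩
      obtain ⟨huleaf', w, hwW, hwadj⟩ := hh1 _ huW'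
      by_cases hw2 : ∃ w2 ∈ W', T'.Adj w w2
      · -- contradiction : a dominating set smaller than the independence number
        exfalso
        have hdom : IsDomSet T (insert s (Subtype.val '' W' \ {↑w})) := by
          intro x hx
          have hsD : s ∈ insert s (Subtype.val '' W' \ {(↑w : V)}) := Set.mem_insert _ _
          have hxs : x ≠ s := fun h => hx (h ▸ hsD)
          by_cases hxv : x = v
          · exact ⟨s, hsD, hxv ▸ hadj_sv⟩
          by_cases hxu : x = u
          · exact ⟨s, hsD, hxu ▸ hadj_su⟩
          have hxVs : x ∈ Vs := by
            simp only [hVs, Set.mem_compl_iff, Set.mem_insert_iff, Set.mem_singleton_iff]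
            push_neg
            exact ⟨hxv, hxs⟩
          by_cases hxw : x = ↑w
          · obtain ⟨w2, hw2W, hw2adj⟩ := hw2
            refine ⟨↑w2, Set.mem_insert_of_mem _ ⟨⟨w2, hw2W, rfl⟩, ?_⟩, ?_⟩
            · simp only [Set.mem_singleton_iff]
              intro hval
              exact hw2adj.ne ((Subtype.ext hval).symm ▸ rfl)
            · exact hxw ▸ (induceAdj.1 hw2adj).symm
          · have hxW' : (⟨x, hxVs⟩ : ↥Vs) ∉ W' := by
              intro h
              apply hx
              refine Set.mem_insert_of_mem _ ⟨⟨⟨x, hxVs⟩, h, rfl⟩, ?_⟩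
              simpa using hxw
            obtain ⟨-, w3, hw3W, hw3adj⟩ := hh1 _ hxW'
            by_cases hww3 : w3 = w
            · exfalso
              obtain ⟨l0, -, hluniq⟩ := hh2 w hwW
              have e1 := hluniq ⟨x, hxVs⟩ ⟨hxW', hww3 ▸ hw3adj⟩
              have e2 := hluniq ⟨u, huVs⟩ ⟨huW', hwadj⟩
              apply hxu
              have := e1.trans e2.symm
              exact congr_arg Subtype.val this
            · refine ⟨↑w3, Set.mem_insert_of_mem _ ⟨⟨w3, hw3W, rfl⟩, ?_⟩, induceAdj.1 hw3adj⟩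
              simp only [Set.mem_singleton_iff]
              exact fun hval => hww3 (Subtype.ext hval)
        have hDcard : (insert s (Subtype.val '' W' \ {(↑w : V)})).ncard ≤ W'.ncard := by
          have h1 := Set.ncard_insert_le s (Subtype.val '' W' \ {(↑w : V)})
          have h2 : ((Subtype.val '' W') \ {(↑w : V)}).ncard = (Subtype.val '' W').ncard - 1 :=
            Set.ncard_diff_singleton_of_mem (show (↑w : V) ∈ Subtype.val '' W' from ⟨w, hwW, rfl⟩)
          have h3 : (Subtype.val '' W').ncard = W'.ncard :=
            Set.ncard_image_of_injective _ Subtype.val_injective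
          have h4 : 0 < W'.ncard := (Set.ncard_pos (Set.toFinite _)).2 ⟨w, hwW⟩
          omega
        have hind : IsIndep T (insert v (Subtype.val '' ((W'ᶜ : Set ↥Vs)))) := by
          intro a ha b hb hadj
          have hkey : ∀ c, c ∈ Subtype.val '' (W'ᶜ : Set ↥Vs) → ¬ T.Adj v c := by
            rintro c ⟨c', -, rfl⟩ hadjc
            have : ↑c' ∈ T.neighborSet v := hadjc
            rw [hvnb] at this
            exact hsVs (this ▸ c'.2)
          rcases ha with rfl | ha' <;> rcases hb with rfl | hb'
          · exact hadj.ne rfl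
          · exact hkey b hb' hadj
          · exact hkey a ha' hadj.symm
          · obtain ⟨a', ha'', rfl⟩ := ha'
            obtain ⟨b', hb'', rfl⟩ := hb'
            have hadj' : T'.Adj a' b' := induceAdj.2 hadj
            obtain ⟨haleaf, wa, hwaW, hwaadj⟩ := hh1 a' ha''
            have := haleaf.nbr_eq hwaadj
            have hbmem : b' ∈ T'.neighborSet a' := hadj'
            rw [this] at hbmem
            exact hb'' (hbmem ▸ hwaW)
        have hIcard : (insert v (Subtype.val '' ((W'ᶜ : Set ↥Vs)))).ncard =
            (W'ᶜ : Set ↥Vs).ncard + 1 := by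
          have hvim : v ∉ Subtype.val '' (W'ᶜ : Set ↥Vs) := by
            rintro ⟨c', -, hc⟩
            exact hvVs (hc ▸ c'.2)
          rw [Set.ncard_insert_of_notMem hvim (Set.toFinite _),
            Set.ncard_image_of_injective _ Subtype.val_injective]
        have hcompl : W'.ncard ≤ (W'ᶜ : Set ↥Vs).ncard := W_le_compl T' hh1 hh2
        have hi := le_indepNum T hind
        have hd := domNum_le T hdom
        omega
      · -- T' = K₂ : T is the path v s u w
        push_neg at hw2
        have key : ∀ (b : ↥W') (p : (T'.induce W').Walk ⟨w, hwW⟩ b), (⟨w, hwW⟩ : ↥W') = b := by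
          intro b p
          cases p with
          | nil => rfl
          | @cons _ y _ h q => exact absurd (induceAdj.1 h) (hw2 ↑y y.2)
        have hW'single : ∀ x ∈ W', x = w := by
          intro x hxW
          obtain ⟨p⟩ := hconn'.preconnected ⟨w, hwW⟩ ⟨x, hxW⟩
          have := key _ p
          exact (congr_arg Subtype.val this).symm
        have hVs_eq : ∀ x : ↥Vs, x = w ∨ x = ⟨u, huVs⟩ := by
          intro x
          by_cases hxW : x ∈ W'
          · exact Or.inl (hW'single x hxW)
          · obtain ⟨-, wx, hwxW, hwxadj⟩ := hh1 x hxW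
            obtain ⟨l0, -, hluniq⟩ := hh2 w hwW
            have hwxw : wx = w := hW'single wx hwxW
            have e1 := hluniq x ⟨hxW, hwxw ▸ hwxadj⟩
            have e2 := hluniq ⟨u, huVs⟩ ⟨huW', hwadj⟩
            exact Or.inr (e1.trans e2.symm)
        have hadj_uw : T.Adj u ↑w := (induceAdj.1 hwadj).symm
        have hwu : (↑w : V) ≠ u := fun h => huW (h ▸ ⟨w, hwW, rfl⟩)
        have hwv : (↑w : V) ≠ v := fun h => hvVs (h ▸ w.2)
        have hws : (↑w : V) ≠ s := fun h => hsVs (h ▸ w.2)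
        -- neighbor sets
        have hunb : T.neighborSet u = {s, ↑w} := by
          ext z
          simp only [mem_neighborSet, Set.mem_insert_iff, Set.mem_singleton_iff]
          constructor
          · intro hz
            by_cases hzv : z = v
            · exfalso
              have : u ∈ T.neighborSet z := hz.symm
              rw [hzv, hvnb] at this
              exact hsu (Set.mem_singleton_iff.1 this).symm
            by_cases hzs : z = s
            · exact Or.inl hzs
            have hzVs : z ∈ Vs := by
              simp only [hVs, Set.mem_compl_iff, Set.mem_insert_iff, Set.mem_singleton_iff]
              push_neg
              exact ⟨hzv, hzs⟩
            rcases hVs_eq ⟨z, hzVs⟩ with h | h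
            · exact Or.inr (congr_arg Subtype.val h)
            · exact absurd (congr_arg Subtype.val h) hz.ne'
          · rintro (rfl | rfl)
            · exact hadj_su.symm
            · exact hadj_uw
        have hwnb : T.neighborSet ↑w = {u} := by
          ext z
          simp only [mem_neighborSet, Set.mem_singleton_iff]
          constructor
          · intro hz
            by_cases hzv : z = v
            · exfalso
              have : ↑w ∈ T.neighborSet z := hz.symm
              rw [hzv, hvnb] at this
              exact hws (Set.mem_singleton_iff.1 this)
            by_cases hzs : z = s
            · exfalso
              have : ↑w ∈ T.neighborSet z := hz.symm
              rw [hzs, hsnb] at this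
              rcases this with h | h
              · exact hwv h
              · exact hwu h
            have hzVs : z ∈ Vs := by
              simp only [hVs, Set.mem_compl_iff, Set.mem_insert_iff, Set.mem_singleton_iff]
              push_neg
              exact ⟨hzv, hzs⟩
            rcases hVs_eq ⟨z, hzVs⟩ with h | h
            · exact absurd (congr_arg Subtype.val h) hz.ne'
            · exact congr_arg Subtype.val h
          · rintro rfl
            exact hadj_uw.symm
        -- the corona with W = {s, u}
        refine ⟨{s, u}, ?_, ?_, ?_⟩
        · intro x hx
          have hxs : x ≠ s := fun h => hx (h ▸ Set.mem_insert _ _)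
          have hxu : x ≠ u := fun h => hx (h ▸ Set.mem_insert_of_mem _ rfl)
          by_cases hxv : x = v
          · exact ⟨hxv ▸ hvleaf, s, Set.mem_insert _ _, hxv ▸ hadj_sv⟩
          · have hxVs : x ∈ Vs := by
              simp only [hVs, Set.mem_compl_iff, Set.mem_insert_iff, Set.mem_singleton_iff]
              push_neg
              exact ⟨hxv, hxs⟩
            have hxw : x = ↑w := by
              rcases hVs_eq ⟨x, hxVs⟩ with h | h
              · exact congr_arg Subtype.val h
              · exact absurd (congr_arg Subtype.val h) hxu
            refine ⟨?_, u, Set.mem_insert_of_mem _ rfl, hxw ▸ hadj_uw⟩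
            rw [IsLeaf, hxw, hwnb]
            simp
        · intro x hx
          rcases hx with rfl | rfl
          · refine ⟨v, ⟨?_, hadj_sv⟩, ?_⟩
            · rintro (h | h)
              · exact hvs h
              · exact hvu h
            · rintro m ⟨hm1, hm2⟩
              have : m ∈ T.neighborSet x := hm2
              rw [hsnb] at this
              rcases this with rfl | rfl
              · rfl
              · exact absurd (Set.mem_insert_of_mem _ rfl) hm1
          · refine ⟨↑w, ⟨?_, hadj_uw⟩, ?_⟩
            · rintro (h | h)
              · exact hws h
              · exact hwu h
            · rintro m ⟨hm1, hm2⟩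
              have : m ∈ T.neighborSet x := hm2
              rw [hunb] at this
              rcases this with rfl | rfl
              · exact absurd (Set.mem_insert _ _) hm1
              · rfl
        · have hsm : s ∈ ({s, u} : Set V) := Set.mem_insert _ _
          have hum : u ∈ ({s, u} : Set V) := Set.mem_insert_of_mem _ rfl
          have hreach : ∀ a : ↥({s, u} : Set V),
              (T.induce ({s, u} : Set V)).Reachable a ⟨u, hum⟩ := by
            rintro ⟨a, ha⟩
            rcases ha with rfl | rfl
            · exact (induceAdj.2 hadj_su).reachable
            · exact Reachable.refl _
          rw [connected_iff]
          exact ⟨fun a b => (hreach a).trans (hreach b).symm, ⟨⟨s, hsm⟩⟩⟩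



theorem stmt_10 {V : Type*} [Fintype V] (T : SimpleGraph V) (hT : T.IsTree)
    (hnt : 2 ≤ Fintype.card V) :
    domNum T = _root_.indepNum T ↔ IsCorona T := by
  constructor
  · intro h
    exact forward_aux (Fintype.card V) T hT rfl hnt h
  · intro h
    exact corona_gamma_alpha T h
end main
end tool2
end toolbox
end s3
end s2
end basics
end

section
/- For any graphs G and H each having at least two vertices, the Cartesian product G □ H has a pair of disjoint dominating sets with a perfect matching between them (i.e., DD_m(G □ H) is finite), regardless of whether G or H individually have such pairs. -/
open SimpleGraph

variable {V : Type*}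

theorem exists_max_matching' {V : Type*} [Fintype V] (G : SimpleGraph V) :
    ∃ m : V → V, Function.Involutive m ∧ (∀ v, m v ≠ v → G.Adj v (m v)) ∧
      (∀ v w, m v = v → m w = w → ¬G.Adj v w) := by
  classical
  suffices h : ∀ S : Finset V, ∃ m : V → V, Function.Involutive m ∧
      (∀ v, m v ≠ v → G.Adj v (m v) ∧ v ∈ S) ∧
      (∀ v ∈ S, ∀ w ∈ S, m v = v → m w = w → ¬G.Adj v w) by
    obtain ⟨m, h1, h2, h3⟩ := h Finset.univ
    exact ⟨m, h1, fun v hv => (h2 v hv).1,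
      fun v w => h3 v (Finset.mem_univ v) w (Finset.mem_univ w)⟩
  intro S
  induction S using Finset.strongInduction with
  | _ S ih =>
    by_cases hex : ∃ v ∈ S, ∃ w ∈ S, G.Adj v w
    · obtain ⟨v, hv, w, hw, hvw⟩ := hex
      have hne : v ≠ w := G.ne_of_adj hvw
      set S' := (S.erase v).erase w with hS'def
      have hvS' : v ∉ S' := fun h =>
        (Finset.mem_erase.1 (Finset.mem_of_mem_erase h)).1 rfl
      have hwS' : w ∉ S' := fun h => (Finset.mem_erase.1 h).1 rfl
      have hsub : S' ⊂ S :=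
        lt_of_le_of_lt (Finset.erase_subset _ _) (Finset.erase_ssubset hv)
      obtain ⟨m, h1, h2, h3⟩ := ih _ hsub
      have hmem : ∀ x, m x ≠ x → x ∈ S' := fun x hx => (h2 x hx).2
      have hfix : ∀ x, x ∉ S' → m x = x := by
        intro x hx; by_contra hc; exact hx (hmem x hc)
      refine ⟨fun x => if x = v then w else if x = w then v else m x, ?_, ?_, ?_⟩
      · intro x
        by_cases hxv : x = v
        · subst hxv; simp [hne, hne.symm]
        · by_cases hxw : x = w
          · subst hxw; simp [hne, hne.symm, hxv]
          · simp only [if_neg hxv, if_neg hxw]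
            by_cases hmx : m x = x
            · simp [hmx, hxv, hxw]
            · have h1x : m (m x) = x := h1 x
              have hmxmem : m x ∈ S' := hmem _ (fun h => hmx (h1.injective h))
              have hmxv : m x ≠ v := fun h => hvS' (h ▸ hmxmem)
              have hmxw : m x ≠ w := fun h => hwS' (h ▸ hmxmem)
              simp [if_neg hmxv, if_neg hmxw, h1x]
      · intro x hx
        by_cases hxv : x = v
        · subst hxv
          simp only [if_pos rfl] at hx ⊢
          exact ⟨hvw, hv⟩
        · by_cases hxw : x = w
          · subst hxw
            simp only [if_neg hxv, if_pos rfl] at hx ⊢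
            exact ⟨hvw.symm, hw⟩
          · simp only [if_neg hxv, if_neg hxw] at hx ⊢
            exact ⟨(h2 x hx).1, Finset.mem_of_mem_erase (Finset.mem_of_mem_erase (h2 x hx).2)⟩
      · intro a haS b hbS hfa hfb
        by_cases hav : a = v
        · subst hav
          simp only [if_pos rfl] at hfa
          exact absurd hfa.symm hne
        · by_cases haw : a = w
          · subst haw
            simp only [if_neg hav, if_pos rfl] at hfa
            exact absurd hfa hne
          · by_cases hbv : b = v
            · subst hbv
              simp only [if_pos rfl] at hfb
              exact absurd hfb.symm hne
            · by_cases hbw : b = w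
              · subst hbw
                simp only [if_neg hbv, if_pos rfl] at hfb
                exact absurd hfb hne
              · simp only [if_neg hav, if_neg haw] at hfa
                simp only [if_neg hbv, if_neg hbw] at hfb
                exact h3 a (Finset.mem_erase.2 ⟨haw, Finset.mem_erase.2 ⟨hav, haS⟩⟩)
                  b (Finset.mem_erase.2 ⟨hbw, Finset.mem_erase.2 ⟨hbv, hbS⟩⟩) hfa hfb
    · refine ⟨id, fun x => rfl, fun v hv => absurd rfl hv, ?_⟩
      intro v hvS w hwS _ _ hadj
      exact hex ⟨v, hvS, w, hwS, hadj⟩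


theorem exists_adj_all {V : Type*} [Fintype V] {G : SimpleGraph V}
    (hG : G.Connected) (hV : 2 ≤ Fintype.card V) (v : V) : ∃ u, G.Adj v u := by
  obtain ⟨w, hw⟩ := Fintype.exists_ne_of_one_lt_card (by omega) v
  obtain ⟨p⟩ := hG.preconnected v w
  cases p with
  | nil => exact absurd rfl hw
  | cons h _ => exact ⟨_, h⟩

theorem swap_pair_aux {V W : Type*}
    (G : SimpleGraph V) (H : SimpleGraph W)
    (hGn : ∀ a : V, ∃ c, G.Adj a c) (hHn : ∀ b : W, ∃ c, H.Adj b c)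
    (mG : V → V) (mGi : Function.Involutive mG)
    (mGadj : ∀ v, mG v ≠ v → G.Adj v (mG v))
    (mGmax : ∀ v w, mG v = v → mG w = w → ¬G.Adj v w)
    (mH : W → W) (mHi : Function.Involutive mH)
    (mHadj : ∀ v, mH v ≠ v → H.Adj v (mH v))
    (mHmax : ∀ v w, mH v = v → mH w = w → ¬H.Adj v w)
    (rG : V → ℕ) (rGinj : Function.Injective rG)
    (rH : W → ℕ) (rHinj : Function.Injective rH) :
    ∃ D D', IsSwapPair (G.boxProd H) D D' := by
  classical
  -- row classes
  set U : Set V := {a | mG a ≠ a ∧ rG a < rG (mG a)} with hUdef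
  set V1 : Set V := {a | mG a ≠ a ∧ rG (mG a) < rG a} with hV1def
  set X : Set W := {b | mH b ≠ b ∧ rH b < rH (mH b)} with hXdef
  set Y : Set W := {b | mH b ≠ b ∧ rH (mH b) < rH b} with hYdef
  have triG : ∀ a, mG a ≠ a → a ∈ U ∨ a ∈ V1 := by
    intro a h
    rcases lt_or_gt_of_ne (fun he => h (rGinj he).symm : rG a ≠ rG (mG a)) with h' | h'
    · exact Or.inl ⟨h, h'⟩
    · exact Or.inr ⟨h, h'⟩
  have triH : ∀ b, mH b ≠ b → b ∈ X ∨ b ∈ Y := by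
    intro b h
    rcases lt_or_gt_of_ne (fun he => h (rHinj he).symm : rH b ≠ rH (mH b)) with h' | h'
    · exact Or.inl ⟨h, h'⟩
    · exact Or.inr ⟨h, h'⟩
  have hUV1 : ∀ a ∈ U, mG a ∈ V1 := by
    intro a ha
    refine ⟨?_, ?_⟩
    · rw [mGi a]; exact fun h => ha.1 h.symm
    · rw [mGi a]; exact ha.2
  have hV1U : ∀ a ∈ V1, mG a ∈ U := by
    intro a ha
    refine ⟨?_, ?_⟩
    · rw [mGi a]; exact fun h => ha.1 h.symm
    · rw [mGi a]; exact ha.2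
  have hXY : ∀ b ∈ X, mH b ∈ Y := by
    intro b hb
    refine ⟨?_, ?_⟩
    · rw [mHi b]; exact fun h => hb.1 h.symm
    · rw [mHi b]; exact hb.2
  have hYX : ∀ b ∈ Y, mH b ∈ X := by
    intro b hb
    refine ⟨?_, ?_⟩
    · rw [mHi b]; exact fun h => hb.1 h.symm
    · rw [mHi b]; exact hb.2
  have dUV1 : ∀ a, a ∈ U → a ∈ V1 → False := fun a h1 h2 => lt_asymm h1.2 h2.2
  have dXY : ∀ b, b ∈ X → b ∈ Y → False := fun b h1 h2 => lt_asymm h1.2 h2.2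
  have hGunm : ∀ a, a ∉ U → a ∉ V1 → mG a = a := by
    intro a h1 h2
    by_contra h
    rcases triG a h with h' | h'
    · exact h1 h'
    · exact h2 h'
  have hHunm : ∀ b, b ∉ X → b ∉ Y → mH b = b := by
    intro b h1 h2
    by_contra h
    rcases triH b h with h' | h'
    · exact h1 h'
    · exact h2 h'
  -- flip rows and Z columns
  set flp : Set V := {a | a ∉ U ∧ ∀ u ∈ U, ¬G.Adj u a} with hflpdef
  set ZX : Set W := {b | b ∉ X ∧ ∀ x ∈ X, ¬H.Adj x b} with hZXdef
  set ZY : Set W := {b | b ∉ Y ∧ ∀ y ∈ Y, ¬H.Adj y b} with hZYdef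
  have dUflp : ∀ a, a ∈ U → a ∈ flp → False := fun a h1 h2 => h2.1 h1
  have dV1flp : ∀ a, a ∈ V1 → a ∈ flp → False := by
    intro a h1 h2
    exact h2.2 (mG a) (hV1U a h1) (mGadj a h1.1).symm
  have dYZX : ∀ b, b ∈ Y → b ∈ ZX → False := by
    intro b h1 h2
    exact h2.2 (mH b) (hYX b h1) (mHadj b h1.1).symm
  have dXZY : ∀ b, b ∈ X → b ∈ ZY → False := by
    intro b h1 h2
    exact h2.2 (mH b) (hXY b h1) (mHadj b h1.1).symm
  have hZXnm : ∀ b, b ∈ ZX → mH b = b := fun b hb =>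
    hHunm b hb.1 (fun h => dYZX b h hb)
  have hZYnm : ∀ b, b ∈ ZY → mH b = b := fun b hb =>
    hHunm b (fun h => dXZY b h hb) hb.1
  have dZXZY : ∀ b, b ∈ ZX → b ∈ ZY → False := by
    intro b h1 h2
    obtain ⟨c, hc⟩ := hHn b
    by_cases hmc : mH c = c
    · exact mHmax b c (hZXnm b h1) hmc hc
    · rcases triH c hmc with h' | h'
      · exact h1.2 c h' hc.symm
      · exact h2.2 c h' hc.symm
  have hflpnm : ∀ a, a ∈ flp → mG a = a := fun a ha =>
    hGunm a ha.1 (fun h => dV1flp a h ha)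
  -- the sets
  set D : Set (V × W) := {p | (p.1 ∉ flp ∧ p.2 ∈ X) ∨ (p.1 ∈ flp ∧ p.2 ∈ Y) ∨
      (p.1 ∈ U ∧ p.2 ∈ ZX) ∨ (p.1 ∈ V1 ∧ p.2 ∈ ZY)} with hDdef
  set D' : Set (V × W) := {p | (p.1 ∉ flp ∧ p.2 ∈ Y) ∨ (p.1 ∈ flp ∧ p.2 ∈ X) ∨
      (p.1 ∈ V1 ∧ p.2 ∈ ZX) ∨ (p.1 ∈ U ∧ p.2 ∈ ZY)} with hD'def
  set F : V × W → V × W := fun p => if mH p.2 = p.2 then (mG p.1, p.2) else (p.1, mH p.2)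
    with hFdef
  have hFfix : ∀ p : V × W, mH p.2 = p.2 → F p = (mG p.1, p.2) := by
    intro p h; simp only [hFdef, if_pos h]
  have hFmov : ∀ p : V × W, mH p.2 ≠ p.2 → F p = (p.1, mH p.2) := by
    intro p h; simp only [hFdef, if_neg h]
  have hFF : ∀ p, F (F p) = p := by
    intro p
    by_cases h : mH p.2 = p.2
    · rw [hFfix p h, hFfix (mG p.1, p.2) h]
      simp [mGi p.1]
    · rw [hFmov p h]
      have h2 : mH (p.1, mH p.2).2 ≠ (p.1, mH p.2).2 := by
        simp only []
        rw [mHi p.2]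
        exact fun he => h he.symm
      rw [hFmov _ h2]
      simp [mHi p.2]
  have hXmov : ∀ b, b ∈ X → mH b ≠ b := fun b hb => hb.1
  have hYmov : ∀ b, b ∈ Y → mH b ≠ b := fun b hb => hb.1
  have hD2D' : ∀ p ∈ D, F p ∈ D' := by
    rintro ⟨a, b⟩ (⟨h1, h2⟩ | ⟨h1, h2⟩ | ⟨h1, h2⟩ | ⟨h1, h2⟩)
    · rw [hFmov (a, b) (hXmov b h2)]
      exact Or.inl ⟨h1, hXY b h2⟩
    · rw [hFmov (a, b) (hYmov b h2)]
      exact Or.inr (Or.inl ⟨h1, hYX b h2⟩)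
    · rw [hFfix (a, b) (hZXnm b h2)]
      exact Or.inr (Or.inr (Or.inl ⟨hUV1 a h1, h2⟩))
    · rw [hFfix (a, b) (hZYnm b h2)]
      exact Or.inr (Or.inr (Or.inr ⟨hV1U a h1, h2⟩))
  have hD'2D : ∀ p ∈ D', F p ∈ D := by
    rintro ⟨a, b⟩ (⟨h1, h2⟩ | ⟨h1, h2⟩ | ⟨h1, h2⟩ | ⟨h1, h2⟩)
    · rw [hFmov (a, b) (hYmov b h2)]
      exact Or.inl ⟨h1, hYX b h2⟩
    · rw [hFmov (a, b) (hXmov b h2)]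
      exact Or.inr (Or.inl ⟨h1, hXY b h2⟩)
    · rw [hFfix (a, b) (hZXnm b h2)]
      exact Or.inr (Or.inr (Or.inl ⟨hV1U a h1, h2⟩))
    · rw [hFfix (a, b) (hZYnm b h2)]
      exact Or.inr (Or.inr (Or.inr ⟨hUV1 a h1, h2⟩))
  have hAdjF : ∀ p ∈ D, (G.boxProd H).Adj p (F p) := by
    rintro ⟨a, b⟩ (⟨h1, h2⟩ | ⟨h1, h2⟩ | ⟨h1, h2⟩ | ⟨h1, h2⟩)
    · rw [hFmov (a, b) (hXmov b h2)]
      exact boxProd_adj.2 (Or.inr ⟨mHadj b h2.1, rfl⟩)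
    · rw [hFmov (a, b) (hYmov b h2)]
      exact boxProd_adj.2 (Or.inr ⟨mHadj b h2.1, rfl⟩)
    · rw [hFfix (a, b) (hZXnm b h2)]
      exact boxProd_adj.2 (Or.inl ⟨mGadj a h1.1, rfl⟩)
    · rw [hFfix (a, b) (hZYnm b h2)]
      exact boxProd_adj.2 (Or.inl ⟨mGadj a h1.1, rfl⟩)
  -- domination of D
  have hDomD : IsDomSet (G.boxProd H) D := by
    rintro ⟨a, b⟩ hp
    by_cases hf : a ∈ flp
    · by_cases hyb : ∃ y ∈ Y, H.Adj y b
      · obtain ⟨y, hy, hadj⟩ := hyb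
        exact ⟨(a, y), Or.inr (Or.inl ⟨hf, hy⟩), boxProd_adj.2 (Or.inr ⟨hadj, rfl⟩)⟩
      · have hbY : b ∉ Y := fun h => hp (Or.inr (Or.inl ⟨hf, h⟩))
        have hbZY : b ∈ ZY := ⟨hbY, fun y hy hadj => hyb ⟨y, hy, hadj⟩⟩
        obtain ⟨c, hc⟩ := hGn a
        have hcV1 : c ∈ V1 := by
          by_cases hmc : mG c = c
          · exact absurd hc (mGmax a c (hflpnm a hf) hmc)
          · rcases triG c hmc with h' | h'
            · exact absurd hc.symm (hf.2 c h')
            · exact h'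
        exact ⟨(c, b), Or.inr (Or.inr (Or.inr ⟨hcV1, hbZY⟩)),
          boxProd_adj.2 (Or.inl ⟨hc.symm, rfl⟩)⟩
    · by_cases hxb : ∃ x ∈ X, H.Adj x b
      · obtain ⟨x, hx, hadj⟩ := hxb
        exact ⟨(a, x), Or.inl ⟨hf, hx⟩, boxProd_adj.2 (Or.inr ⟨hadj, rfl⟩)⟩
      · have hbX : b ∉ X := fun h => hp (Or.inl ⟨hf, h⟩)
        have hbZX : b ∈ ZX := ⟨hbX, fun x hx hadj => hxb ⟨x, hx, hadj⟩⟩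
        by_cases haU : a ∈ U
        · exact absurd (Or.inr (Or.inr (Or.inl ⟨haU, hbZX⟩))) hp
        · have hadjU : ∃ u ∈ U, G.Adj u a := by
            by_contra h
            exact hf ⟨haU, fun u hu hadj => h ⟨u, hu, hadj⟩⟩
          obtain ⟨u, hu, hadj⟩ := hadjU
          exact ⟨(u, b), Or.inr (Or.inr (Or.inl ⟨hu, hbZX⟩)),
            boxProd_adj.2 (Or.inl ⟨hadj, rfl⟩)⟩
  -- domination of D'
  have hDomD' : IsDomSet (G.boxProd H) D' := by
    rintro ⟨a, b⟩ hp
    by_cases hf : a ∈ flp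
    · by_cases hxb : ∃ x ∈ X, H.Adj x b
      · obtain ⟨x, hx, hadj⟩ := hxb
        exact ⟨(a, x), Or.inr (Or.inl ⟨hf, hx⟩), boxProd_adj.2 (Or.inr ⟨hadj, rfl⟩)⟩
      · have hbX : b ∉ X := fun h => hp (Or.inr (Or.inl ⟨hf, h⟩))
        have hbZX : b ∈ ZX := ⟨hbX, fun x hx hadj => hxb ⟨x, hx, hadj⟩⟩
        obtain ⟨c, hc⟩ := hGn a
        have hcV1 : c ∈ V1 := by
          by_cases hmc : mG c = c
          · exact absurd hc (mGmax a c (hflpnm a hf) hmc)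
          · rcases triG c hmc with h' | h'
            · exact absurd hc.symm (hf.2 c h')
            · exact h'
        exact ⟨(c, b), Or.inr (Or.inr (Or.inl ⟨hcV1, hbZX⟩)),
          boxProd_adj.2 (Or.inl ⟨hc.symm, rfl⟩)⟩
    · by_cases hyb : ∃ y ∈ Y, H.Adj y b
      · obtain ⟨y, hy, hadj⟩ := hyb
        exact ⟨(a, y), Or.inl ⟨hf, hy⟩, boxProd_adj.2 (Or.inr ⟨hadj, rfl⟩)⟩
      · have hbY : b ∉ Y := fun h => hp (Or.inl ⟨hf, h⟩)
        have hbZY : b ∈ ZY := ⟨hbY, fun y hy hadj => hyb ⟨y, hy, hadj⟩⟩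
        by_cases haU : a ∈ U
        · exact absurd (Or.inr (Or.inr (Or.inr ⟨haU, hbZY⟩))) hp
        · have hadjU : ∃ u ∈ U, G.Adj u a := by
            by_contra h
            exact hf ⟨haU, fun u hu hadj => h ⟨u, hu, hadj⟩⟩
          obtain ⟨u, hu, hadj⟩ := hadjU
          exact ⟨(u, b), Or.inr (Or.inr (Or.inr ⟨hu, hbZY⟩)),
            boxProd_adj.2 (Or.inl ⟨hadj, rfl⟩)⟩
  -- disjointness
  have hDisj : Disjoint D D' := by
    rw [Set.disjoint_left]
    rintro ⟨a, b⟩ (⟨h1a, h1b⟩ | ⟨h1a, h1b⟩ | ⟨h1a, h1b⟩ | ⟨h1a, h1b⟩)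
      (⟨h2a, h2b⟩ | ⟨h2a, h2b⟩ | ⟨h2a, h2b⟩ | ⟨h2a, h2b⟩)
    · exact dXY b h1b h2b
    · exact h1a h2a
    · exact h2b.1 h1b
    · exact dXZY b h1b h2b
    · exact h2a h1a
    · exact dXY b h2b h1b
    · exact dV1flp a h2a h1a
    · exact dUflp a h2a h1a
    · exact dYZX b h2b h1b
    · exact dUflp a h1a h2a
    · exact dUV1 a h1a h2a
    · exact dZXZY b h1b h2b
    · exact h1b.1 h2b
    · exact dV1flp a h1a h2a
    · exact dZXZY b h2b h1b
    · exact dUV1 a h2a h1a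
  refine ⟨D, D', hDomD, hDomD', hDisj,
    ⟨⟨fun x => ⟨F x, hD2D' x x.2⟩, fun y => ⟨F y, hD'2D y y.2⟩,
      fun x => Subtype.ext (hFF x), fun y => Subtype.ext (hFF y)⟩,
      fun x => hAdjF x x.2⟩⟩

theorem stmt_14 {V W : Type*} [Fintype V] [Fintype W]
    (G : SimpleGraph V) (H : SimpleGraph W)
    (hG : G.Connected) (hH : H.Connected)
    (hV : 2 ≤ Fintype.card V) (hW : 2 ≤ Fintype.card W) :
    ∃ D D', IsSwapPair (G.boxProd H) D D' := by
  classical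
  obtain ⟨mG, mGi, mGadj, mGmax⟩ := exists_max_matching' G
  obtain ⟨mH, mHi, mHadj, mHmax⟩ := exists_max_matching' H
  exact swap_pair_aux G H (exists_adj_all hG hV) (exists_adj_all hH hW)
    mG mGi mGadj mGmax mH mHi mHadj mHmax
    (fun a => (Fintype.equivFin V a : ℕ)) (fun a b h => (Fintype.equivFin V).injective (Fin.val_injective h))
    (fun b => (Fintype.equivFin W b : ℕ)) (fun a b h => (Fintype.equivFin W).injective (Fin.val_injective h))
end

section
/- If G and H are non-trivial graphs with swap sets, then DD_m(G □ H) ≤ min{ DD_m(G) · |V(H)|, DD_m(H) · |V(G)| }. -/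
open SimpleGraph

variable {V : Type*}

lemma lift_left {V W : Type*} (G : SimpleGraph V) (H : SimpleGraph W)
    {D D' : Set V} (h : IsSwapPair G D D') :
    IsSwapPair (G.boxProd H) (D ×ˢ Set.univ) (D' ×ˢ Set.univ) := by
  obtain ⟨h1, h2, h3, f, hf⟩ := h
  refine ⟨?_, ?_, ?_, ?_⟩
  · intro p hp
    have : p.1 ∉ D := fun hm => hp ⟨hm, trivial⟩
    obtain ⟨u, hu, hadj⟩ := h1 p.1 this
    exact ⟨(u, p.2), ⟨hu, trivial⟩, Or.inl ⟨hadj, rfl⟩⟩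
  · intro p hp
    have : p.1 ∉ D' := fun hm => hp ⟨hm, trivial⟩
    obtain ⟨u, hu, hadj⟩ := h2 p.1 this
    exact ⟨(u, p.2), ⟨hu, trivial⟩, Or.inl ⟨hadj, rfl⟩⟩
  · rw [Set.disjoint_left]
    rintro p ⟨hp, -⟩ ⟨hp', -⟩
    exact Set.disjoint_left.mp h3 hp hp'
  · refine ⟨⟨fun x => ⟨((f ⟨x.1.1, x.2.1⟩ : V), x.1.2), (f _).2, trivial⟩,
      fun y => ⟨((f.symm ⟨y.1.1, y.2.1⟩ : V), y.1.2), (f.symm _).2, trivial⟩, ?_, ?_⟩, ?_⟩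
    · rintro ⟨⟨a, b⟩, ha, -⟩
      simp
    · rintro ⟨⟨a, b⟩, ha, -⟩
      simp
    · rintro ⟨⟨a, b⟩, ha, -⟩
      exact Or.inl ⟨hf ⟨a, ha⟩, rfl⟩

lemma lift_right {V W : Type*} (G : SimpleGraph V) (H : SimpleGraph W)
    {D D' : Set W} (h : IsSwapPair H D D') :
    IsSwapPair (G.boxProd H) (Set.univ ×ˢ D) (Set.univ ×ˢ D') := by
  obtain ⟨h1, h2, h3, f, hf⟩ := h
  refine ⟨?_, ?_, ?_, ?_⟩
  · intro p hp
    have : p.2 ∉ D := fun hm => hp ⟨trivial, hm⟩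
    obtain ⟨u, hu, hadj⟩ := h1 p.2 this
    exact ⟨(p.1, u), ⟨trivial, hu⟩, Or.inr ⟨hadj, rfl⟩⟩
  · intro p hp
    have : p.2 ∉ D' := fun hm => hp ⟨trivial, hm⟩
    obtain ⟨u, hu, hadj⟩ := h2 p.2 this
    exact ⟨(p.1, u), ⟨trivial, hu⟩, Or.inr ⟨hadj, rfl⟩⟩
  · rw [Set.disjoint_left]
    rintro p ⟨-, hp⟩ ⟨-, hp'⟩
    exact Set.disjoint_left.mp h3 hp hp'
  · refine ⟨⟨fun x => ⟨(x.1.1, (f ⟨x.1.2, x.2.2⟩ : W)), trivial, (f _).2⟩,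
      fun y => ⟨(y.1.1, (f.symm ⟨y.1.2, y.2.2⟩ : W)), trivial, (f.symm _).2⟩, ?_, ?_⟩, ?_⟩
    · rintro ⟨⟨a, b⟩, -, hb⟩
      simp
    · rintro ⟨⟨a, b⟩, -, hb⟩
      simp
    · rintro ⟨⟨a, b⟩, -, hb⟩
      exact Or.inr ⟨hf ⟨b, hb⟩, rfl⟩

lemma ncard_prod' {V W : Type*} (s : Set V) (t : Set W) :
    (s ×ˢ t).ncard = s.ncard * t.ncard := by
  rw [← Nat.card_coe_set_eq, ← Nat.card_coe_set_eq, ← Nat.card_coe_set_eq,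
    Nat.card_congr (Equiv.Set.prod s t), Nat.card_prod]

theorem stmt_15 {V W : Type*} [Fintype V] [Fintype W]
    (G : SimpleGraph V) (H : SimpleGraph W)
    (hV : 2 ≤ Fintype.card V) (hW : 2 ≤ Fintype.card W)
    (hG : ∃ D D', IsSwapPair G D D') (hH : ∃ D D', IsSwapPair H D D') :
    DDm (G.boxProd H) ≤
      min (DDm G * (Fintype.card W : ℕ∞)) (DDm H * (Fintype.card V : ℕ∞)) := by
  refine le_min ?_ ?_
  · obtain ⟨D, D', hD⟩ := hG
    have hne : {n : ℕ∞ | ∃ D D' : Set V, IsSwapPair G D D' ∧ (D.ncard : ℕ∞) = n}.Nonempty :=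
      ⟨_, D, D', hD, rfl⟩
    obtain ⟨E, E', hE, hcard⟩ := csInf_mem hne
    have hmem : ((E ×ˢ (Set.univ : Set W)).ncard : ℕ∞) ∈
        {n : ℕ∞ | ∃ D D' : Set (V × W), IsSwapPair (G.boxProd H) D D' ∧ (D.ncard : ℕ∞) = n} :=
      ⟨_, _, lift_left G H hE, rfl⟩
    calc DDm (G.boxProd H) ≤ ((E ×ˢ (Set.univ : Set W)).ncard : ℕ∞) := sInf_le hmem
      _ = DDm G * (Fintype.card W : ℕ∞) := by
        rw [ncard_prod', Set.ncard_univ, Nat.card_eq_fintype_card, DDm, ← hcard]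
        push_cast; ring
  · obtain ⟨D, D', hD⟩ := hH
    have hne : {n : ℕ∞ | ∃ D D' : Set W, IsSwapPair H D D' ∧ (D.ncard : ℕ∞) = n}.Nonempty :=
      ⟨_, D, D', hD, rfl⟩
    obtain ⟨E, E', hE, hcard⟩ := csInf_mem hne
    have hmem : (((Set.univ : Set V) ×ˢ E).ncard : ℕ∞) ∈
        {n : ℕ∞ | ∃ D D' : Set (V × W), IsSwapPair (G.boxProd H) D D' ∧ (D.ncard : ℕ∞) = n} :=
      ⟨_, _, lift_right G H hE, rfl⟩
    calc DDm (G.boxProd H) ≤ (((Set.univ : Set V) ×ˢ E).ncard : ℕ∞) := sInf_le hmem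
      _ = DDm H * (Fintype.card V : ℕ∞) := by
        rw [ncard_prod', Set.ncard_univ, Nat.card_eq_fintype_card, DDm, ← hcard]
        push_cast; ring
end

section
/- Let G be a connected graph with more than 3 vertices and independence number α(G) = 2. Then G contains a pair of disjoint dominating sets of size 2 each with a perfect matching between them; in particular DD_m(G) ≤ 2. -/
open SimpleGraph

variable {V : Type*}

lemma aux_no_triple {V : Type*} [Fintype V] (G : SimpleGraph V)
    (halpha : _root_.indepNum G = 2) :
    ∀ x y z : V, x ≠ y → x ≠ z → y ≠ z →
      ¬ G.Adj x y → ¬ G.Adj x z → ¬ G.Adj y z → False := by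
  intro x y z hxy hxz hyz h1 h2 h3
  have hmem : 3 ∈ {n : ℕ | ∃ I : Set V, (∀ a ∈ I, ∀ b ∈ I, ¬ G.Adj a b) ∧ I.ncard = n} := by
    refine ⟨{x, y, z}, ?_, Set.ncard_eq_three.mpr ⟨x, y, z, hxy, hxz, hyz, rfl⟩⟩
    intro p hp q hq hadj
    simp only [Set.mem_insert_iff, Set.mem_singleton_iff] at hp hq
    rcases hp with rfl | rfl | rfl <;> rcases hq with rfl | rfl | rfl <;>
      first
        | exact G.irrefl hadj
        | exact h1 hadj | exact h1 hadj.symm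
        | exact h2 hadj | exact h2 hadj.symm
        | exact h3 hadj | exact h3 hadj.symm
  have hbdd : BddAbove {n : ℕ | ∃ I : Set V, (∀ a ∈ I, ∀ b ∈ I, ¬ G.Adj a b) ∧ I.ncard = n} := by
    refine ⟨Nat.card V, ?_⟩
    rintro n ⟨I, -, rfl⟩
    simpa [Set.ncard_univ] using Set.ncard_le_ncard (Set.subset_univ I) Set.finite_univ
  have := le_csSup hbdd hmem
  rw [show sSup {n : ℕ | ∃ I : Set V, (∀ a ∈ I, ∀ b ∈ I, ¬ G.Adj a b) ∧ I.ncard = n} = _root_.indepNum G from rfl, halpha] at this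
  omega

lemma aux_pair_dom {V : Type*} [Fintype V] (G : SimpleGraph V)
    (halpha : _root_.indepNum G = 2) {x y : V} (hxy : x ≠ y) (hnadj : ¬ G.Adj x y) :
    IsDomSet G {x, y} := by
  intro v hv
  simp only [Set.mem_insert_iff, Set.mem_singleton_iff, not_or] at hv
  by_contra h
  push_neg at h
  exact aux_no_triple G halpha x y v hxy (Ne.symm hv.1) (Ne.symm hv.2) hnadj
    (h x (by simp)) (h y (by simp))

lemma aux_neighbor {V : Type*} (G : SimpleGraph V) (hconn : G.Connected)
    {a b : V} (hab : a ≠ b) : ∃ c, G.Adj a c := by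
  obtain ⟨w⟩ := hconn.preconnected a b
  cases w with
  | nil => exact absurd rfl hab
  | cons h p => exact ⟨_, h⟩

theorem stmt_17 {V : Type*} [Fintype V] (G : SimpleGraph V)
    (hconn : G.Connected) (hcard : 3 < Fintype.card V)
    (halpha : _root_.indepNum G = 2) :
    (∃ D D', IsSwapPair G D D' ∧ D.ncard = 2 ∧ D'.ncard = 2) ∧
    DDm G ≤ 2 := by
  classical
  -- obtain an independent pair a b
  have hbdd : BddAbove {n : ℕ | ∃ I : Set V, (∀ a ∈ I, ∀ b ∈ I, ¬ G.Adj a b) ∧ I.ncard = n} := by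
    refine ⟨Nat.card V, ?_⟩
    rintro n ⟨I, -, rfl⟩
    simpa [Set.ncard_univ] using Set.ncard_le_ncard (Set.subset_univ I) Set.finite_univ
  have hne : Set.Nonempty {n : ℕ | ∃ I : Set V, (∀ a ∈ I, ∀ b ∈ I, ¬ G.Adj a b) ∧ I.ncard = n} :=
    ⟨0, ∅, by simp, Set.ncard_empty _⟩
  have hmem := Nat.sSup_mem hne hbdd
  rw [show sSup {n : ℕ | ∃ I : Set V, (∀ a ∈ I, ∀ b ∈ I, ¬ G.Adj a b) ∧ I.ncard = n} = _root_.indepNum G from rfl, halpha] at hmem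
  obtain ⟨I, hI, hI2⟩ := hmem
  obtain ⟨a, b, hab, rfl⟩ := Set.ncard_eq_two.mp hI2
  have hnadj : ¬ G.Adj a b := hI a (by simp) b (by simp)
  have hno3 := aux_no_triple G halpha
  -- two more vertices
  have h2out : ∃ e f : V, e ≠ f ∧ e ≠ a ∧ e ≠ b ∧ f ≠ a ∧ f ≠ b := by
    have hcs : 1 < (Finset.univ \ {a, b} : Finset V).card := by
      have h1 : ({a, b} : Finset V).card ≤ 2 := Finset.card_insert_le _ _ |>.trans (by simp)
      have h2 := Finset.card_sdiff_add_card_eq_card (Finset.subset_univ ({a, b} : Finset V))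
      have := Finset.card_univ (α := V)
      omega
    obtain ⟨e, he, f, hf, hef⟩ := Finset.one_lt_card.mp hcs
    simp only [Finset.mem_sdiff, Finset.mem_univ, true_and, Finset.mem_insert,
      Finset.mem_singleton, not_or] at he hf
    exact ⟨e, f, hef, he.1, he.2, hf.1, hf.2⟩
  obtain ⟨e, f, hef, hea, heb, hfa, hfb⟩ := h2out
  -- key claim
  have key : ∃ c d : V, c ≠ d ∧ c ≠ a ∧ c ≠ b ∧ d ≠ a ∧ d ≠ b ∧
      G.Adj a c ∧ G.Adj b d ∧ IsDomSet G {c, d} := by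
    by_cases H : ∃ e f : V, e ≠ f ∧ e ≠ a ∧ e ≠ b ∧ f ≠ a ∧ f ≠ b ∧ ¬ G.Adj e f
    · obtain ⟨e, f, hef, hea, heb, hfa, hfb, hnef⟩ := H
      have h1 : G.Adj a e ∨ G.Adj b e := by
        by_contra h; push_neg at h
        exact hno3 a b e hab (Ne.symm hea) (Ne.symm heb) hnadj h.1 h.2
      have h2 : G.Adj a f ∨ G.Adj b f := by
        by_contra h; push_neg at h
        exact hno3 a b f hab (Ne.symm hfa) (Ne.symm hfb) hnadj h.1 h.2
      have h3 : G.Adj b e ∨ G.Adj b f := by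
        by_contra h; push_neg at h
        exact hno3 e f b hef heb hfb hnef
          (fun hh => h.1 hh.symm) (fun hh => h.2 hh.symm)
      by_cases hae : G.Adj a e
      · by_cases hbf : G.Adj b f
        · exact ⟨e, f, hef, hea, heb, hfa, hfb, hae, hbf,
            aux_pair_dom G halpha hef hnef⟩
        · have haf : G.Adj a f := h2.resolve_right hbf
          have hbe : G.Adj b e := h3.resolve_right hbf
          exact ⟨f, e, hef.symm, hfa, hfb, hea, heb, haf, hbe,
            aux_pair_dom G halpha hef.symm (fun hh => hnef hh.symm)⟩
      · have hbe : G.Adj b e := h1.resolve_left hae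
        have haf : G.Adj a f := by
          by_contra haf
          exact hno3 e f a hef hea hfa hnef
            (fun hh => hae hh.symm) (fun hh => haf hh.symm)
        exact ⟨f, e, hef.symm, hfa, hfb, hea, heb, haf, hbe,
          aux_pair_dom G halpha hef.symm (fun hh => hnef hh.symm)⟩
    · push_neg at H
      -- all vertices outside {a,b} are pairwise adjacent
      have hclq : ∀ x y : V, x ≠ y → x ≠ a → x ≠ b → y ≠ a → y ≠ b → G.Adj x y := by
        intro x y h1 h2 h3 h4 h5
        by_contra h
        exact h (H x y h1 h2 h3 h4 h5)
      have domCD : ∀ c d : V, c ≠ d → c ≠ a → c ≠ b → d ≠ a → d ≠ b →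
          G.Adj a c → G.Adj b d → IsDomSet G {c, d} := by
        intro c d hcd hca hcb hda hdb hac hbd v hv
        simp only [Set.mem_insert_iff, Set.mem_singleton_iff, not_or] at hv
        by_cases hva : v = a
        · exact ⟨c, by simp, hva ▸ hac.symm⟩
        · by_cases hvb : v = b
          · exact ⟨d, by simp, hvb ▸ hbd.symm⟩
          · exact ⟨c, by simp, hclq c v (Ne.symm hv.1) hca hcb hva hvb⟩
      obtain ⟨c₀, hac₀⟩ := aux_neighbor G hconn hab
      obtain ⟨d₀, hbd₀⟩ := aux_neighbor G hconn hab.symm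
      have hc₀a : c₀ ≠ a := fun h => G.irrefl (h ▸ hac₀)
      have hc₀b : c₀ ≠ b := fun h => hnadj (h ▸ hac₀)
      have hd₀b : d₀ ≠ b := fun h => G.irrefl (h ▸ hbd₀)
      have hd₀a : d₀ ≠ a := fun h => hnadj (h ▸ hbd₀).symm
      by_cases hcd : c₀ = d₀
      · -- pick g ∈ {e,f} with g ≠ c₀
        subst hcd
        obtain ⟨g, hgc, hga, hgb⟩ : ∃ g : V, g ≠ c₀ ∧ g ≠ a ∧ g ≠ b := by
          by_cases hg : e = c₀
          · exact ⟨f, fun h => hef (hg ▸ h ▸ rfl), hfa, hfb⟩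
          · exact ⟨e, hg, hea, heb⟩
        have hg1 : G.Adj a g ∨ G.Adj b g := by
          by_contra h; push_neg at h
          exact hno3 a b g hab (Ne.symm hga) (Ne.symm hgb) hnadj h.1 h.2
        rcases hg1 with hag | hbg
        · exact ⟨g, c₀, hgc, hga, hgb, hc₀a, hc₀b, hag, hbd₀,
            domCD g c₀ hgc hga hgb hc₀a hc₀b hag hbd₀⟩
        · exact ⟨c₀, g, Ne.symm hgc, hc₀a, hc₀b, hga, hgb, hac₀, hbg,
            domCD c₀ g (Ne.symm hgc) hc₀a hc₀b hga hgb hac₀ hbg⟩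
      · exact ⟨c₀, d₀, hcd, hc₀a, hc₀b, hd₀a, hd₀b, hac₀, hbd₀,
          domCD c₀ d₀ hcd hc₀a hc₀b hd₀a hd₀b hac₀ hbd₀⟩
  obtain ⟨c, d, hcd, hca, hcb, hda, hdb, hac, hbd, hdomCD⟩ := key
  have hdomAB : IsDomSet G {a, b} := aux_pair_dom G halpha hab hnadj
  have hdisj : Disjoint ({a, b} : Set V) {c, d} := by
    rw [Set.disjoint_left]
    rintro x (rfl | rfl) (rfl | rfl) <;> simp_all
  have hswap : IsSwapPair G {a, b} {c, d} := by
    refine ⟨hdomAB, hdomCD, hdisj, ?_⟩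
    refine ⟨⟨fun x => if x.1 = a then ⟨c, by simp⟩ else ⟨d, by simp⟩,
      fun y => if y.1 = c then ⟨a, by simp⟩ else ⟨b, by simp⟩, ?_, ?_⟩, ?_⟩
    · rintro ⟨x, hx⟩
      rcases hx with rfl | hx
      · simp [Ne.symm hcd]
      · rw [Set.mem_singleton_iff] at hx
        subst hx
        simp [Ne.symm hab, Ne.symm hcd, hcd]
    · rintro ⟨y, hy⟩
      rcases hy with rfl | hy
      · simp
      · rw [Set.mem_singleton_iff] at hy
        subst hy
        simp [Ne.symm hab, Ne.symm hcd]
    · rintro ⟨x, hx⟩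
      rcases hx with rfl | hx
      · simpa using hac
      · rw [Set.mem_singleton_iff] at hx
        subst hx
        simp only [Equiv.coe_fn_mk]
        rw [if_neg (Ne.symm hab)]
        exact hbd
  constructor
  · exact ⟨{a, b}, {c, d}, hswap, Set.ncard_pair hab, Set.ncard_pair hcd⟩
  · refine sInf_le ⟨{a, b}, {c, d}, hswap, ?_⟩
    rw [Set.ncard_pair hab]
    rfl
end

section
/- Let G be a connected graph with independence number α(G) = 3 that contains a swap set. Then DD_m(G) ≤ 3. -/
open SimpleGraph

variable {V : Type*}

namespace Stmt18Aux

variable {V : Type*} [Fintype V] {G : SimpleGraph V}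

lemma indep_bdd (halpha : _root_.indepNum G = 3) {S : Set V}
    (hS : ∀ a ∈ S, ∀ b ∈ S, ¬ G.Adj a b) : S.ncard ≤ 3 := by
  have hbdd : BddAbove {n : ℕ | ∃ I : Set V, (∀ a ∈ I, ∀ b ∈ I, ¬ G.Adj a b) ∧ I.ncard = n} := by
    refine ⟨Nat.card V, ?_⟩
    rintro n ⟨I, -, rfl⟩
    have := Set.ncard_le_ncard (Set.subset_univ I) Set.finite_univ
    rwa [Set.ncard_univ] at this
  have hmem : S.ncard ∈ {n : ℕ | ∃ I : Set V, (∀ a ∈ I, ∀ b ∈ I, ¬ G.Adj a b) ∧ I.ncard = n} :=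
    ⟨S, hS, rfl⟩
  have := le_csSup hbdd hmem
  rwa [show sSup {n : ℕ | ∃ I : Set V, (∀ a ∈ I, ∀ b ∈ I, ¬ G.Adj a b) ∧ I.ncard = n}
      = _root_.indepNum G from rfl, halpha] at this

lemma triple_dom (halpha : _root_.indepNum G = 3) {x y z : V}
    (hxy : x ≠ y) (hxz : x ≠ z) (hyz : y ≠ z)
    (hnxy : ¬ G.Adj x y) (hnxz : ¬ G.Adj x z) (hnyz : ¬ G.Adj y z) (w : V) :
    w = x ∨ w = y ∨ w = z ∨ G.Adj x w ∨ G.Adj y w ∨ G.Adj z w := by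
  by_contra h
  push_neg at h
  obtain ⟨h1, h2, h3, h4, h5, h6⟩ := h
  have hind : ∀ a ∈ ({w, x, y, z} : Set V), ∀ b ∈ ({w, x, y, z} : Set V), ¬ G.Adj a b := by
    intro a ha b hb
    simp only [Set.mem_insert_iff, Set.mem_singleton_iff] at ha hb
    rcases ha with rfl | rfl | rfl | rfl <;> rcases hb with rfl | rfl | rfl | rfl <;>
      first
        | exact G.loopless.irrefl _
        | exact h4 | exact h5 | exact h6 | exact hnxy | exact hnxz | exact hnyz
        | exact fun hh => h4 hh.symm
        | exact fun hh => h5 hh.symm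
        | exact fun hh => h6 hh.symm
        | exact fun hh => hnxy hh.symm
        | exact fun hh => hnxz hh.symm
        | exact fun hh => hnyz hh.symm
  have hcard : ({w, x, y, z} : Set V).ncard = 4 := by
    rw [Set.ncard_insert_of_notMem (by simp [h1, h2, h3]) (Set.toFinite _),
        Set.ncard_insert_of_notMem (by simp [hxy, hxz]) (Set.toFinite _),
        Set.ncard_insert_of_notMem (by simp [hyz]) (Set.toFinite _),
        Set.ncard_singleton]
  have := indep_bdd halpha hind
  rw [hcard] at this
  omega

lemma exists_indep3 (halpha : _root_.indepNum G = 3) :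
    ∃ x y z : V, x ≠ y ∧ x ≠ z ∧ y ≠ z ∧
      ¬ G.Adj x y ∧ ¬ G.Adj x z ∧ ¬ G.Adj y z := by
  have hbdd : BddAbove {n : ℕ | ∃ I : Set V, (∀ a ∈ I, ∀ b ∈ I, ¬ G.Adj a b) ∧ I.ncard = n} := by
    refine ⟨Nat.card V, ?_⟩
    rintro n ⟨I, -, rfl⟩
    have := Set.ncard_le_ncard (Set.subset_univ I) Set.finite_univ
    rwa [Set.ncard_univ] at this
  have hne : {n : ℕ | ∃ I : Set V, (∀ a ∈ I, ∀ b ∈ I, ¬ G.Adj a b) ∧ I.ncard = n}.Nonempty :=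
    ⟨0, ∅, by simp, by simp⟩
  have h := Nat.sSup_mem hne hbdd
  rw [show sSup {n : ℕ | ∃ I : Set V, (∀ a ∈ I, ∀ b ∈ I, ¬ G.Adj a b) ∧ I.ncard = n}
      = _root_.indepNum G from rfl, halpha] at h
  obtain ⟨I, hind, hI⟩ := h
  obtain ⟨x, y, z, hxy, hxz, hyz, rfl⟩ := Set.ncard_eq_three.mp hI
  exact ⟨x, y, z, hxy, hxz, hyz,
    hind x (by simp) y (by simp), hind x (by simp) z (by simp), hind y (by simp) z (by simp)⟩

lemma no_two_leaves (hsw : ∃ D D', IsSwapPair G D D') {c p q : V} (hpq : p ≠ q)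
    (hp : ∀ u, G.Adj p u → u = c) (hq : ∀ u, G.Adj q u → u = c) : False := by
  obtain ⟨D, D', ⟨hD, hD', hdisj, f, hf⟩⟩ := hsw
  have key : ∀ r : V, (∀ u, G.Adj r u → u = c) → ∀ E : Set V, IsDomSet G E →
      (r ∈ E ∨ c ∈ E) := by
    intro r hr E hE
    by_cases hrE : r ∈ E
    · exact Or.inl hrE
    · obtain ⟨u, huE, hu⟩ := hE r hrE
      exact Or.inr ((hr u hu.symm) ▸ huE)
  by_cases hcD : c ∈ D
  · have hcD' : c ∉ D' := Set.disjoint_left.mp hdisj hcD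
    have hp' : p ∈ D' := ((key p hp D' hD').resolve_right hcD')
    have hq' : q ∈ D' := ((key q hq D' hD').resolve_right hcD')
    have h1 : ((f.symm ⟨p, hp'⟩ : D) : V) = c := by
      have h := hf (f.symm ⟨p, hp'⟩)
      rw [Equiv.apply_symm_apply] at h
      exact hp _ h.symm
    have h2 : ((f.symm ⟨q, hq'⟩ : D) : V) = c := by
      have h := hf (f.symm ⟨q, hq'⟩)
      rw [Equiv.apply_symm_apply] at h
      exact hq _ h.symm
    have h3 : f.symm ⟨p, hp'⟩ = f.symm ⟨q, hq'⟩ := Subtype.ext (h1.trans h2.symm)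
    have h4 := f.symm.injective h3
    exact hpq (congrArg Subtype.val h4)
  · have hpD : p ∈ D := (key p hp D hD).resolve_right hcD
    have hqD : q ∈ D := (key q hq D hD).resolve_right hcD
    have h1 : ((f ⟨p, hpD⟩ : D') : V) = c := hp _ (hf ⟨p, hpD⟩)
    have h2 : ((f ⟨q, hqD⟩ : D') : V) = c := hq _ (hf ⟨q, hqD⟩)
    have h3 := f.injective (Subtype.ext (h1.trans h2.symm))
    exact hpq (congrArg Subtype.val h3)

lemma exists_nbr (hconn : G.Connected) {x y : V} (hxy : x ≠ y) (w : V) :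
    ∃ u, G.Adj w u := by
  have hne : ∃ w', w' ≠ w := by
    by_cases h : w = x
    · exact ⟨y, fun hh => hxy (h ▸ hh).symm⟩
    · exact ⟨x, fun hh => h hh.symm⟩
  obtain ⟨w', hw'⟩ := hne
  obtain ⟨p⟩ := hconn.preconnected w w'
  cases p with
  | nil => exact absurd rfl hw'.symm
  | cons h _ => exact ⟨_, h⟩

lemma exists_sdr (hsw : ∃ D D', IsSwapPair G D D')
    (hnbr : ∀ w : V, ∃ u, G.Adj w u)
    {x y z : V} (hxy : x ≠ y) (hxz : x ≠ z) (hyz : y ≠ z)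
    (hbig : ∀ e₁ e₂ : V, ∃ u, (G.Adj x u ∨ G.Adj y u ∨ G.Adj z u) ∧ u ≠ e₁ ∧ u ≠ e₂) :
    ∃ a b c, a ≠ b ∧ a ≠ c ∧ b ≠ c ∧ G.Adj x a ∧ G.Adj y b ∧ G.Adj z c := by
  have hpair : ∀ p q : V, p ≠ q → ∀ e, G.Adj p e → G.Adj q e →
      ∃ u, (G.Adj p u ∧ u ≠ e) ∨ (G.Adj q u ∧ u ≠ e) := by
    intro p q hpq e hpe hqe
    by_contra h
    push_neg at h
    refine no_two_leaves (c := e) hsw hpq ?_ ?_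
    · exact fun u hu => (h u).1 hu
    · exact fun u hu => (h u).2 hu
  obtain ⟨a₀, ha₀⟩ := hnbr x
  obtain ⟨b₀, hb₀⟩ := hnbr y
  have step1 : ∃ a b, a ≠ b ∧ G.Adj x a ∧ G.Adj y b := by
    by_cases h : a₀ = b₀
    · subst h
      obtain ⟨u, hu⟩ := hpair x y hxy a₀ ha₀ hb₀
      rcases hu with ⟨hxu, hne⟩ | ⟨hyu, hne⟩
      · exact ⟨u, a₀, hne, hxu, hb₀⟩
      · exact ⟨a₀, u, hne.symm, ha₀, hyu⟩
    · exact ⟨a₀, b₀, h, ha₀, hb₀⟩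
  obtain ⟨a, b, hab, hxa, hyb⟩ := step1
  by_cases hc : ∃ c, G.Adj z c ∧ c ≠ a ∧ c ≠ b
  · obtain ⟨c, h1, h2, h3⟩ := hc
    exact ⟨a, b, c, hab, h2.symm, h3.symm, hxa, hyb, h1⟩
  · push_neg at hc
    have hNz : ∀ c, G.Adj z c → c = a ∨ c = b := by
      intro c h
      by_cases h' : c = a
      · exact Or.inl h'
      · exact Or.inr (hc c h h')
    obtain ⟨c₀, hc₀⟩ := hnbr z
    have hfinal : (∀ u, G.Adj x u → u = a ∨ u = b) →
        (∀ u, G.Adj y u → u = a ∨ u = b) → False := by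
      intro hNx hNy
      obtain ⟨u, hu, hua, hub⟩ := hbig a b
      rcases hu with h | h | h
      · rcases hNx u h with rfl | rfl
        · exact hua rfl
        · exact hub rfl
      · rcases hNy u h with rfl | rfl
        · exact hua rfl
        · exact hub rfl
      · rcases hNz u h with rfl | rfl
        · exact hua rfl
        · exact hub rfl
    rcases hNz c₀ hc₀ with rfl | rfl
    · by_cases ha2 : ∃ a', G.Adj x a' ∧ a' ≠ c₀ ∧ a' ≠ b
      · obtain ⟨a', h1, h2, h3⟩ := ha2
        exact ⟨a', b, c₀, h3, h2, hab.symm, h1, hyb, hc₀⟩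
      · push_neg at ha2
        have hNx : ∀ u, G.Adj x u → u = c₀ ∨ u = b := by
          intro u h
          by_cases h' : u = c₀
          · exact Or.inl h'
          · exact Or.inr (ha2 u h h')
        by_cases hxb : G.Adj x b
        · by_cases hb2 : ∃ b', G.Adj y b' ∧ b' ≠ c₀ ∧ b' ≠ b
          · obtain ⟨b', h1, h2, h3⟩ := hb2
            exact ⟨b, b', c₀, (fun hh => h3 hh.symm), hab.symm, h2, hxb, h1, hc₀⟩
          · push_neg at hb2
            exfalso
            refine hfinal hNx ?_
            intro u h
            by_cases h' : u = c₀
            · exact Or.inl h'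
            · exact Or.inr (hb2 u h h')
        · by_cases hzb : G.Adj z b
          · by_cases hb2 : ∃ b', G.Adj y b' ∧ b' ≠ c₀ ∧ b' ≠ b
            · obtain ⟨b', h1, h2, h3⟩ := hb2
              exact ⟨c₀, b', b, (fun hh => h2 hh.symm), hab, h3, hxa, h1, hzb⟩
            · push_neg at hb2
              exfalso
              refine hfinal hNx ?_
              intro u h
              by_cases h' : u = c₀
              · exact Or.inl h'
              · exact Or.inr (hb2 u h h')
          · have hx1 : ∀ u, G.Adj x u → u = c₀ := by
              intro u h
              rcases hNx u h with rfl | rfl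
              · rfl
              · exact absurd h hxb
            have hz1 : ∀ u, G.Adj z u → u = c₀ := by
              intro u h
              rcases hNz u h with rfl | rfl
              · rfl
              · exact absurd h hzb
            obtain ⟨u, hu⟩ := hpair x z hxz c₀ hxa hc₀
            rcases hu with ⟨h1, h2⟩ | ⟨h1, h2⟩
            · exact absurd (hx1 u h1) h2
            · exact absurd (hz1 u h1) h2
    · by_cases hb2 : ∃ b', G.Adj y b' ∧ b' ≠ a ∧ b' ≠ c₀
      · obtain ⟨b', h1, h2, h3⟩ := hb2
        exact ⟨a, b', c₀, (fun hh => h2 hh.symm), hab, h3, hxa, h1, hc₀⟩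
      · push_neg at hb2
        have hNy : ∀ u, G.Adj y u → u = a ∨ u = c₀ := by
          intro u h
          by_cases h' : u = a
          · exact Or.inl h'
          · exact Or.inr (hb2 u h h')
        by_cases hya : G.Adj y a
        · by_cases ha2 : ∃ a', G.Adj x a' ∧ a' ≠ a ∧ a' ≠ c₀
          · obtain ⟨a', h1, h2, h3⟩ := ha2
            exact ⟨a', a, c₀, h2, h3, hab, h1, hya, hc₀⟩
          · push_neg at ha2
            exfalso
            refine hfinal ?_ hNy
            intro u h
            by_cases h' : u = a
            · exact Or.inl h'
            · exact Or.inr (ha2 u h h')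
        · by_cases hza : G.Adj z a
          · by_cases ha2 : ∃ a', G.Adj x a' ∧ a' ≠ a ∧ a' ≠ c₀
            · obtain ⟨a', h1, h2, h3⟩ := ha2
              exact ⟨a', c₀, a, h3, h2, (fun hh => hab hh.symm), h1, hyb, hza⟩
            · push_neg at ha2
              exfalso
              refine hfinal ?_ hNy
              intro u h
              by_cases h' : u = a
              · exact Or.inl h'
              · exact Or.inr (ha2 u h h')
          · have hy1 : ∀ u, G.Adj y u → u = c₀ := by
              intro u h
              rcases hNy u h with rfl | rfl
              · exact absurd h hya
              · rfl
            have hz1 : ∀ u, G.Adj z u → u = c₀ := by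
              intro u h
              rcases hNz u h with rfl | rfl
              · exact absurd h hza
              · rfl
            obtain ⟨u, hu⟩ := hpair y z hyz c₀ hyb hc₀
            rcases hu with ⟨h1, h2⟩ | ⟨h1, h2⟩
            · exact absurd (hy1 u h1) h2
            · exact absurd (hz1 u h1) h2

open scoped Classical in
noncomputable def covN (G : SimpleGraph V) (a b c : V) : Finset V :=
  Finset.univ.filter
    (fun w => w = a ∨ w = b ∨ w = c ∨ G.Adj a w ∨ G.Adj b w ∨ G.Adj c w)

lemma mem_covN {a b c w : V} :
    w ∈ covN G a b c ↔
      (w = a ∨ w = b ∨ w = c ∨ G.Adj a w ∨ G.Adj b w ∨ G.Adj c w) := by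
  simp [covN]

lemma covN_swap12 (a b c : V) : covN G a b c = covN G b a c := by
  ext w; simp only [mem_covN]; tauto

lemma covN_swap23 (a b c : V) : covN G a b c = covN G a c b := by
  ext w; simp only [mem_covN]; tauto

lemma covN_swap13 (a b c : V) : covN G a b c = covN G c b a := by
  rw [covN_swap12, covN_swap23, covN_swap12]

lemma build (halpha : _root_.indepNum G = 3) {x y z p q r : V}
    (hxy : x ≠ y) (hxz : x ≠ z) (hyz : y ≠ z)
    (hnxy : ¬G.Adj x y) (hnxz : ¬G.Adj x z) (hnyz : ¬G.Adj y z)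
    (hpq : p ≠ q) (hpr : p ≠ r) (hqr : q ≠ r)
    (hxp : G.Adj x p) (hyq : G.Adj y q) (hzr : G.Adj z r)
    (hdom' : ∀ w, w = p ∨ w = q ∨ w = r ∨ G.Adj p w ∨ G.Adj q w ∨ G.Adj r w) :
    DDm G ≤ 3 := by
  classical
  set D : Set V := {x, y, z} with hD
  set D' : Set V := {p, q, r} with hD'
  have hpx : p ≠ x := fun h => G.loopless.irrefl x (h ▸ hxp)
  have hpy : p ≠ y := fun h => hnxy (h ▸ hxp)
  have hpz : p ≠ z := fun h => hnxz (h ▸ hxp)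
  have hqx : q ≠ x := fun h => hnxy ((h ▸ hyq).symm)
  have hqy : q ≠ y := fun h => G.loopless.irrefl y (h ▸ hyq)
  have hqz : q ≠ z := fun h => hnyz (h ▸ hyq)
  have hrx : r ≠ x := fun h => hnxz ((h ▸ hzr).symm)
  have hry : r ≠ y := fun h => hnyz ((h ▸ hzr).symm)
  have hrz : r ≠ z := fun h => G.loopless.irrefl z (h ▸ hzr)
  have hdomD : IsDomSet G D := by
    intro v hv
    rcases triple_dom halpha hxy hxz hyz hnxy hnxz hnyz v with h | h | h | h | h | h
    · exact absurd (by rw [h]; exact Set.mem_insert _ _) hv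
    · exact absurd (by rw [h, hD]; simp) hv
    · exact absurd (by rw [h, hD]; simp) hv
    · exact ⟨x, by simp [hD], h⟩
    · exact ⟨y, by simp [hD], h⟩
    · exact ⟨z, by simp [hD], h⟩
  have hdomD' : IsDomSet G D' := by
    intro v hv
    rcases hdom' v with h | h | h | h | h | h
    · exact absurd (by rw [h, hD']; simp) hv
    · exact absurd (by rw [h, hD']; simp) hv
    · exact absurd (by rw [h, hD']; simp) hv
    · exact ⟨p, by simp [hD'], h⟩
    · exact ⟨q, by simp [hD'], h⟩
    · exact ⟨r, by simp [hD'], h⟩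
  have hdisj : Disjoint D D' := by
    rw [Set.disjoint_left]
    intro w hw hw'
    simp only [hD, hD', Set.mem_insert_iff, Set.mem_singleton_iff] at hw hw'
    rcases hw with rfl | rfl | rfl <;> rcases hw' with h | h | h <;>
      first
        | exact hpx h.symm | exact hpy h.symm | exact hpz h.symm
        | exact hqx h.symm | exact hqy h.symm | exact hqz h.symm
        | exact hrx h.symm | exact hry h.symm | exact hrz h.symm
  have hcard : D.ncard = 3 := Set.ncard_eq_three.mpr ⟨x, y, z, hxy, hxz, hyz, rfl⟩
  have hpD' : p ∈ D' := by simp [hD']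
  have hqD' : q ∈ D' := by simp [hD']
  have hrD' : r ∈ D' := by simp [hD']
  have hxD : x ∈ D := by simp [hD]
  have hyD : y ∈ D := by simp [hD]
  have hzD : z ∈ D := by simp [hD]
  have hmatch : ∃ f : D ≃ D', ∀ w : D, G.Adj w (f w) := by
    refine ⟨⟨fun w => if w.1 = x then ⟨p, hpD'⟩ else if w.1 = y then ⟨q, hqD'⟩ else ⟨r, hrD'⟩,
            fun w => if w.1 = p then ⟨x, hxD⟩ else if w.1 = q then ⟨y, hyD⟩ else ⟨z, hzD⟩,
            ?_, ?_⟩, ?_⟩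
    · rintro ⟨w, hw⟩
      simp only [hD, Set.mem_insert_iff, Set.mem_singleton_iff] at hw
      rcases hw with rfl | rfl | rfl
      · simp
      · simp [Ne.symm hxy, Ne.symm hpq]
      · simp [Ne.symm hxz, Ne.symm hyz, Ne.symm hpr, Ne.symm hqr]
    · rintro ⟨w, hw⟩
      simp only [hD', Set.mem_insert_iff, Set.mem_singleton_iff] at hw
      rcases hw with rfl | rfl | rfl
      · simp
      · simp [Ne.symm hpq, Ne.symm hxy]
      · simp [Ne.symm hpr, Ne.symm hqr, Ne.symm hxz, Ne.symm hyz]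
    · rintro ⟨w, hw⟩
      simp only [hD, Set.mem_insert_iff, Set.mem_singleton_iff] at hw
      rcases hw with rfl | rfl | rfl
      · simpa using hxp
      · simpa [Ne.symm hxy] using hyq
      · simpa [Ne.symm hxz, Ne.symm hyz] using hzr
  refine le_trans (sInf_le ⟨D, D', ⟨hdomD, hdomD', hdisj, hmatch⟩, ?_⟩) (le_refl _)
  rw [hcard]
  rfl

lemma core (halpha : _root_.indepNum G = 3) {x y z a b c v : V}
    (hxy : x ≠ y) (hxz : x ≠ z) (hyz : y ≠ z)
    (hnxy : ¬G.Adj x y) (hnxz : ¬G.Adj x z) (hnyz : ¬G.Adj y z)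
    (hbc : b ≠ c)
    (hyb : G.Adj y b) (hzc : G.Adj z c)
    (hmax : ∀ a' b' c', a' ≠ b' → a' ≠ c' → b' ≠ c' →
      G.Adj x a' → G.Adj y b' → G.Adj z c' →
      (covN G a' b' c').card ≤ (covN G a b c).card)
    (hva : v ≠ a) (hvb : v ≠ b) (hvc : v ≠ c)
    (hav : ¬G.Adj a v) (hbv : ¬G.Adj b v) (hcv : ¬G.Adj c v)
    (hxv : G.Adj x v) : DDm G ≤ 3 := by
  classical
  have hle := hmax v b c hvb hvc hbc hxv hyb hzc
  have hss : ¬ (covN G a b c ⊆ covN G v b c) := by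
    intro hsub
    have hvmem : v ∈ covN G v b c := mem_covN.mpr (Or.inl rfl)
    have hvnot : v ∉ covN G a b c := by
      rw [mem_covN]
      push_neg
      exact ⟨hva, hvb, hvc, hav, hbv, hcv⟩
    have hlt := Finset.card_lt_card ((Finset.ssubset_iff_of_subset hsub).mpr ⟨v, hvmem, hvnot⟩)
    omega
  obtain ⟨u, humem, hunot⟩ := Finset.not_subset.mp hss
  rw [mem_covN] at humem hunot
  push_neg at hunot
  obtain ⟨huv, hub, huc, hvu, hbu, hcu⟩ := hunot
  have hux : u ≠ x := fun h => hvu (h ▸ hxv.symm)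
  have huy : u ≠ y := fun h => hbu (h ▸ hyb.symm)
  have huz : u ≠ z := fun h => hcu (h ▸ hzc.symm)
  have hvx : v ≠ x := fun h => G.loopless.irrefl x (h ▸ hxv)
  have hvy : v ≠ y := fun h => hbv (h ▸ hyb.symm)
  have hvz : v ≠ z := fun h => hcv (h ▸ hzc.symm)
  by_cases hzu : G.Adj z u
  · exact build halpha hxy hxz hyz hnxy hnxz hnyz hvb (Ne.symm huv) (Ne.symm hub)
      hxv hyb hzu
      (triple_dom halpha hvb (Ne.symm huv) (Ne.symm hub)
        (fun h => hbv h.symm) hvu hbu)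
  by_cases hyu : G.Adj y u
  · exact build halpha hxy hxz hyz hnxy hnxz hnyz (Ne.symm huv) hvc huc
      hxv hyu hzc
      (triple_dom halpha (Ne.symm huv) hvc huc
        hvu (fun h => hcv h.symm) (fun h => hcu h.symm))
  have hxu : G.Adj x u := by
    rcases triple_dom halpha hxy hxz hyz hnxy hnxz hnyz u with h | h | h | h | h | h
    · exact absurd h hux
    · exact absurd h huy
    · exact absurd h huz
    · exact h
    · exact absurd h hyu
    · exact absurd h hzu
  by_cases hzv : G.Adj z v
  · exact build halpha hxy hxz hyz hnxy hnxz hnyz hub huv (Ne.symm hvb)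
      hxu hyb hzv
      (triple_dom halpha hub huv (Ne.symm hvb)
        (fun h => hbu h.symm) (fun h => hvu h.symm) hbv)
  by_cases hyv : G.Adj y v
  · exact build halpha hxy hxz hyz hnxy hnxz hnyz huv huc hvc
      hxu hyv hzc
      (triple_dom halpha huv huc hvc
        (fun h => hvu h.symm) (fun h => hcu h.symm) (fun h => hcv h.symm))
  · exfalso
    rcases triple_dom halpha huy huz hyz
        (fun h => hyu h.symm) (fun h => hzu h.symm) hnyz v with h | h | h | h | h | h
    · exact huv h.symm
    · exact hvy h
    · exact hvz h
    · exact hvu h.symm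
    · exact hyv h
    · exact hzv h

end Stmt18Aux

theorem stmt_18 {V : Type*} [Fintype V] (G : SimpleGraph V)
    (hconn : G.Connected) (halpha : _root_.indepNum G = 3)
    (hswap : ∃ D D', IsSwapPair G D D') :
    DDm G ≤ 3 := by
  classical
  open Stmt18Aux in
  obtain ⟨D₀, D₀', hpair₀⟩ := hswap
  by_cases hsmall : D₀.ncard ≤ 3
  · refine le_trans (sInf_le ⟨D₀, D₀', hpair₀, rfl⟩) ?_
    exact_mod_cast hsmall
  · push_neg at hsmall
    obtain ⟨x, y, z, hxy, hxz, hyz, hnxy, hnxz, hnyz⟩ := exists_indep3 (G := G) halpha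
    have hnbr : ∀ w : V, ∃ u, G.Adj w u := fun w => exists_nbr hconn hxy w
    have hcard : 6 ≤ Nat.card V := by
      obtain ⟨hDdom, hD'dom, hdisj0, f0, hf0⟩ := hpair₀
      have h1 : D₀'.ncard = D₀.ncard := by
        rw [← Nat.card_coe_set_eq, ← Nat.card_coe_set_eq]
        exact Nat.card_congr f0.symm
      have h2 : (D₀ ∪ D₀').ncard = D₀.ncard + D₀'.ncard :=
        Set.ncard_union_eq hdisj0 (Set.toFinite _) (Set.toFinite _)
      have h3 : (D₀ ∪ D₀').ncard ≤ Nat.card V := by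
        have := Set.ncard_le_ncard (Set.subset_univ (D₀ ∪ D₀')) Set.finite_univ
        rwa [Set.ncard_univ] at this
      omega
    have hbig : ∀ e₁ e₂ : V, ∃ u, (G.Adj x u ∨ G.Adj y u ∨ G.Adj z u) ∧ u ≠ e₁ ∧ u ≠ e₂ := by
      intro e₁ e₂
      by_contra hcon
      push_neg at hcon
      have hsub : (Set.univ : Set V) ⊆ {x, y, z, e₁, e₂} := by
        intro w _
        simp only [Set.mem_insert_iff, Set.mem_singleton_iff]
        have hadj : ∀ hw : G.Adj x w ∨ G.Adj y w ∨ G.Adj z w,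
            w = x ∨ w = y ∨ w = z ∨ w = e₁ ∨ w = e₂ := by
          intro hw
          by_cases he : w = e₁
          · exact Or.inr (Or.inr (Or.inr (Or.inl he)))
          · exact Or.inr (Or.inr (Or.inr (Or.inr (hcon w hw he))))
        rcases triple_dom halpha hxy hxz hyz hnxy hnxz hnyz w with h | h | h | h | h | h
        · exact Or.inl h
        · exact Or.inr (Or.inl h)
        · exact Or.inr (Or.inr (Or.inl h))
        · exact hadj (Or.inl h)
        · exact hadj (Or.inr (Or.inl h))
        · exact hadj (Or.inr (Or.inr h))
      have h1 := Set.ncard_le_ncard hsub (Set.toFinite _)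
      rw [Set.ncard_univ] at h1
      have i1 := Set.ncard_insert_le x ({y, z, e₁, e₂} : Set V)
      have i2 := Set.ncard_insert_le y ({z, e₁, e₂} : Set V)
      have i3 := Set.ncard_insert_le z ({e₁, e₂} : Set V)
      have i4 := Set.ncard_insert_le e₁ ({e₂} : Set V)
      have i5 : ({e₂} : Set V).ncard = 1 := Set.ncard_singleton e₂
      omega
    obtain ⟨a, b, c, hab, hac, hbc, hxa, hyb, hzc⟩ :=
      exists_sdr ⟨D₀, D₀', hpair₀⟩ hnbr hxy hxz hyz hbig
    let S : Finset (V × V × V) := Finset.univ.filter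
      (fun t => t.1 ≠ t.2.1 ∧ t.1 ≠ t.2.2 ∧ t.2.1 ≠ t.2.2 ∧
        G.Adj x t.1 ∧ G.Adj y t.2.1 ∧ G.Adj z t.2.2)
    have hSne : S.Nonempty := ⟨(a, b, c), by
      simp only [S, Finset.mem_filter, Finset.mem_univ, true_and]
      exact ⟨hab, hac, hbc, hxa, hyb, hzc⟩⟩
    obtain ⟨⟨a₀, b₀, c₀⟩, hmem, hmax⟩ :=
      Finset.exists_max_image S (fun t => (covN G t.1 t.2.1 t.2.2).card) hSne
    simp only [S, Finset.mem_filter, Finset.mem_univ, true_and] at hmem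
    obtain ⟨h1, h2, h3, h4, h5, h6⟩ := hmem
    have hmax' : ∀ a' b' c', a' ≠ b' → a' ≠ c' → b' ≠ c' →
        G.Adj x a' → G.Adj y b' → G.Adj z c' →
        (covN G a' b' c').card ≤ (covN G a₀ b₀ c₀).card := by
      intro a' b' c' k1 k2 k3 k4 k5 k6
      exact hmax (a', b', c') (by
        simp only [S, Finset.mem_filter, Finset.mem_univ, true_and]
        exact ⟨k1, k2, k3, k4, k5, k6⟩)
    by_cases hfull : ∀ w, w = a₀ ∨ w = b₀ ∨ w = c₀ ∨ G.Adj a₀ w ∨ G.Adj b₀ w ∨ G.Adj c₀ w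
    · exact build halpha hxy hxz hyz hnxy hnxz hnyz h1 h2 h3 h4 h5 h6 hfull
    · push_neg at hfull
      obtain ⟨v, hv1, hv2, hv3, hv4, hv5, hv6⟩ := hfull
      have hvx : v ≠ x := fun h => hv4 (h ▸ h4.symm)
      have hvy : v ≠ y := fun h => hv5 (h ▸ h5.symm)
      have hvz : v ≠ z := fun h => hv6 (h ▸ h6.symm)
      rcases triple_dom halpha hxy hxz hyz hnxy hnxz hnyz v with h | h | h | h | h | h
      · exact absurd h hvx
      · exact absurd h hvy
      · exact absurd h hvz
      · exact core halpha hxy hxz hyz hnxy hnxz hnyz h3 h5 h6 hmax'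
          hv1 hv2 hv3 hv4 hv5 hv6 h
      · -- v adjacent to y : permute roles (x ↔ y)
        refine core (G := G) (x := y) (y := x) (z := z) (a := b₀) (b := a₀) (c := c₀)
          halpha hxy.symm hyz hxz (fun hh => hnxy hh.symm) hnyz hnxz
          h2 h4 h6 ?_ hv2 hv1 hv3 hv5 hv4 hv6 h
        intro a' b' c' k1 k2 k3 k4 k5 k6
        rw [covN_swap12 (G := G) a' b' c', covN_swap12 (G := G) b₀ a₀ c₀]
        exact hmax' b' a' c' k1.symm k3 k2 k5 k4 k6
      · -- v adjacent to z : permute roles (x ↔ z)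
        refine core (G := G) (x := z) (y := y) (z := x) (a := c₀) (b := b₀) (c := a₀)
          halpha hyz.symm hxz.symm hxy.symm
          (fun hh => hnyz hh.symm) (fun hh => hnxz hh.symm) (fun hh => hnxy hh.symm)
          h1.symm h5 h4 ?_ hv3 hv2 hv1 hv6 hv5 hv4 h
        intro a' b' c' k1 k2 k3 k4 k5 k6
        rw [covN_swap13 (G := G) a' b' c', covN_swap13 (G := G) c₀ b₀ a₀]
        exact hmax' c' b' a' k3.symm k2.symm k1.symm k6 k5 k4
end
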